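/- arXiv:2106.09823 — 8 statements merged into one kernel-verified Lean document; each statement's English description precedes it below -/
import Mathlib

section
/- For any graph G of order n, n / ρ_o(G) ≤ p_o(G) ≤ n − ρ_o(G) + 1, where ρ_o(G) is the maximum cardinality of an open packing in G. -/
open SimpleGraph

variable {V W : Type*}

/-- The two-step graph: vertices adjacent iff they share a common neighbor in `G`. -/
def SimpleGraph.twoStep (G : SimpleGraph V) : SimpleGraph V where
  Adj u v := u ≠ v ∧ ∃ w, G.Adj w u ∧ G.Adj w v
  symm := ⟨fun u v ⟨h, w, h1, h2⟩ => ⟨h.symm, w, h2, h1⟩⟩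
  loopless := ⟨fun u ⟨h, _⟩ => h rfl⟩

/-- `B` is an open packing: no two distinct vertices of `B` have a common neighbor. -/
def SimpleGraph.IsOpenPacking (G : SimpleGraph V) (B : Set V) : Prop :=
  ∀ u ∈ B, ∀ v ∈ B, u ≠ v → ∀ w, ¬(G.Adj w u ∧ G.Adj w v)

/-- The open packing partition number `p_o(G)`. -/
noncomputable def SimpleGraph.openPackingPartitionNum (G : SimpleGraph V) : ℕ :=
  sInf {k | ∃ f : V → Fin k, ∀ i, G.IsOpenPacking (f ⁻¹' {i})}

/-- `B` is a packing: distinct vertices of `B` have disjoint closed neighborhoods. -/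
def SimpleGraph.IsPacking (G : SimpleGraph V) (B : Set V) : Prop :=
  ∀ u ∈ B, ∀ v ∈ B, u ≠ v → ∀ w, ¬((G.Adj w u ∨ w = u) ∧ (G.Adj w v ∨ w = v))

/-- The 2-distance chromatic number `χ₂(G)`. -/
noncomputable def SimpleGraph.twoDistChromaticNum (G : SimpleGraph V) : ℕ :=
  sInf {k | ∃ f : V → Fin k, ∀ i, G.IsPacking (f ⁻¹' {i})}

/-- The open packing number `ρ_o(G)`. -/
noncomputable def SimpleGraph.openPackingNum (G : SimpleGraph V) [Fintype V] : ℕ :=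
  sSup {n | ∃ B : Finset V, G.IsOpenPacking ↑B ∧ B.card = n}

lemma op_subsingleton (G : SimpleGraph V) {B : Set V} (h : B.Subsingleton) :
    G.IsOpenPacking B := fun u hu v hv huv _ _ => huv (h hu hv)

lemma op_bdd (G : SimpleGraph V) [Fintype V] :
    BddAbove {n | ∃ B : Finset V, G.IsOpenPacking ↑B ∧ B.card = n} :=
  ⟨Fintype.card V, fun _ ⟨B, _, hc⟩ => hc ▸ B.card_le_univ⟩

lemma card_le_opNum (G : SimpleGraph V) [Fintype V] {B : Finset V}
    (h : G.IsOpenPacking ↑B) : B.card ≤ G.openPackingNum :=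
  le_csSup (op_bdd G) ⟨B, h, rfl⟩

lemma exists_max_packing (G : SimpleGraph V) [Fintype V] :
    ∃ B : Finset V, G.IsOpenPacking ↑B ∧ B.card = G.openPackingNum :=
  Nat.sSup_mem (s := {n | ∃ B : Finset V, G.IsOpenPacking (B : Set V) ∧ B.card = n})
    ⟨0, ∅, op_subsingleton G (by simp), by simp⟩ (op_bdd G)

theorem stmt_2 [Fintype V] (G : SimpleGraph V) :
    (Fintype.card V : ℝ) / G.openPackingNum ≤ G.openPackingPartitionNum ∧
    G.openPackingPartitionNum ≤ Fintype.card V - G.openPackingNum + 1 := by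
  classical
  set n := Fintype.card V with hn
  set ρ := G.openPackingNum with hρ
  obtain ⟨B, hB, hBcard⟩ := exists_max_packing G
  have hcompl : Bᶜ.card = n - ρ := by rw [Finset.card_compl, hBcard]
  have hmem : (n - ρ + 1) ∈ {k | ∃ f : V → Fin k, ∀ i, G.IsOpenPacking (f ⁻¹' {i})} := by
    refine ⟨fun v => if h : v ∈ B then 0 else
      (Fin.succ ((Bᶜ.equivFin ⟨v, Finset.mem_compl.2 h⟩).cast hcompl)), ?_⟩
    intro i u hu v hv huv w hw
    simp only [Set.mem_preimage, Set.mem_singleton_iff] at hu hv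
    by_cases hub : u ∈ B <;> by_cases hvb : v ∈ B
    · exact hB u hub v hvb huv w hw
    · rw [dif_pos hub] at hu; rw [dif_neg hvb] at hv
      rw [← hv] at hu; exact (Fin.succ_ne_zero _) hu.symm
    · rw [dif_neg hub] at hu; rw [dif_pos hvb] at hv
      rw [← hv] at hu; exact (Fin.succ_ne_zero _) hu
    · rw [dif_neg hub] at hu; rw [dif_neg hvb] at hv
      rw [← hv] at hu
      have h1 := Fin.succ_injective _ hu
      have h2 := (Fin.cast_injective hcompl) h1
      have h3 := Bᶜ.equivFin.injective h2
      exact huv (congrArg Subtype.val h3)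
  refine ⟨?_, Nat.sInf_le hmem⟩
  -- lower bound
  set p := G.openPackingPartitionNum with hp
  obtain ⟨f, hf⟩ : ∃ f : V → Fin p, ∀ i, G.IsOpenPacking (f ⁻¹' {i}) := Nat.sInf_mem ⟨_, hmem⟩
  have hnle : n ≤ p * ρ := by
    have hcount : (Finset.univ : Finset V).card =
        ∑ i : Fin p, (Finset.univ.filter fun v => f v = i).card :=
      Finset.card_eq_sum_card_fiberwise (fun x _ => Finset.mem_univ (f x))
    have hfiber : ∀ i : Fin p, (Finset.univ.filter fun v => f v = i).card ≤ ρ := by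
      intro i
      apply card_le_opNum
      have : ((Finset.univ.filter fun v => f v = i : Finset V) : Set V) = f ⁻¹' {i} := by
        ext v; simp
      rw [this]; exact hf i
    calc n = _ := hcount
      _ ≤ ∑ _i : Fin p, ρ := Finset.sum_le_sum fun i _ => hfiber i
      _ = p * ρ := by simp [Finset.sum_const, mul_comm]
  rcases Nat.eq_zero_or_pos ρ with h0 | hpos
  · have hV : n = 0 := by
      by_contra h
      have : Nonempty V := Fintype.card_pos_iff.mp (Nat.pos_of_ne_zero (by simpa [hn] using h))
      obtain ⟨v⟩ := this
      have : ({v} : Finset V).card ≤ ρ :=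
        card_le_opNum G (op_subsingleton G (by simp))
      simp [h0] at this
    simp [hV, h0]
  · rw [div_le_iff₀ (by exact_mod_cast hpos)]
    exact_mod_cast hnle
end

section
/- For any graph G, χ₂(G)/2 ≤ p_o(G) ≤ χ₂(G), where χ₂(G) is the 2-distance chromatic number of G. -/
open SimpleGraph

variable {V W : Type*}

theorem stmt_3 [Fintype V] (G : SimpleGraph V) :
    G.twoDistChromaticNum ≤ 2 * G.openPackingPartitionNum ∧
    G.openPackingPartitionNum ≤ G.twoDistChromaticNum := by
  classical
  set f0 : V → Fin (Fintype.card V) := ⇑(Fintype.equivFin V) with hf0def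
  have hf0 : Function.Injective f0 := (Fintype.equivFin V).injective
  have hχne : {k | ∃ f : V → Fin k, ∀ i, G.IsPacking (f ⁻¹' {i})}.Nonempty := by
    refine ⟨Fintype.card V, f0, fun i u hu v hv huv w _ => huv (hf0 ?_)⟩
    exact (show f0 u = i from hu).trans (show f0 v = i from hv).symm
  have hpone : {k | ∃ f : V → Fin k, ∀ i, G.IsOpenPacking (f ⁻¹' {i})}.Nonempty := by
    refine ⟨Fintype.card V, f0, fun i u hu v hv huv w _ => huv (hf0 ?_)⟩
    exact (show f0 u = i from hu).trans (show f0 v = i from hv).symm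
  constructor
  · -- χ₂ ≤ 2 * p_o
    obtain ⟨f, hf⟩ := Nat.sInf_mem hpone
    set k := G.openPackingPartitionNum with hk
    let r : V → ℕ := fun v => (Fintype.equivFin V v : ℕ)
    have hrinj : Function.Injective r := fun u v h =>
      (Fintype.equivFin V).injective (Fin.ext h)
    let bit : V → Fin 2 := fun u =>
      if ∃ v, f v = f u ∧ G.Adj u v ∧ r v < r u then 1 else 0
    -- key: adjacent same-class vertices get different bits
    have hbit : ∀ u v, u ≠ v → f u = f v → G.Adj u v → bit u ≠ bit v := by
      have key : ∀ u v, f u = f v → G.Adj u v → r v < r u → bit u = 1 ∧ bit v = 0 := by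
        intro u v hfuv hadj hr
        constructor
        · have : ∃ x, f x = f u ∧ G.Adj u x ∧ r x < r u := ⟨v, hfuv.symm, hadj, hr⟩
          simp only [bit, if_pos this]
        · have : ¬ ∃ x, f x = f v ∧ G.Adj v x ∧ r x < r v := by
            rintro ⟨x, hfx, hadjx, hrx⟩
            have hxu : x ≠ u := by
              intro h; subst h; exact absurd (hrx.trans hr) (lt_irrefl _)
            exact hf (f v) u (show f u = f v from hfuv) x (show f x = f v from hfx)
              (fun h => hxu (h.symm)) v ⟨hadj.symm, hadjx⟩
          simp only [bit, if_neg this]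
      intro u v huv hfuv hadj hbits
      rcases lt_or_gt_of_ne (fun h => huv (hrinj h)) with h | h
      · obtain ⟨h1, h2⟩ := key v u hfuv.symm hadj.symm h
        rw [h1, h2] at hbits; exact absurd hbits (by decide)
      · obtain ⟨h1, h2⟩ := key u v hfuv hadj h
        rw [h1, h2] at hbits; exact absurd hbits (by decide)
    let g : V → Fin (2 * k) := fun v => finProdFinEquiv (bit v, f v)
    have hg : ∀ u v, g u = g v → bit u = bit v ∧ f u = f v := by
      intro u v h
      have := finProdFinEquiv.injective h
      exact ⟨congrArg Prod.fst this, congrArg Prod.snd this⟩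
    apply Nat.sInf_le
    refine ⟨g, fun i u hu v hv huv w hw => ?_⟩
    have hguv : g u = g v := (show g u = i from hu).trans (show g v = i from hv).symm
    obtain ⟨hbits, hfs⟩ := hg u v hguv
    rcases hw.1 with hwu | hwu <;> rcases hw.2 with hwv | hwv
    · exact hf (f u) u rfl v (show f v = f u from hfs.symm) huv w ⟨hwu, hwv⟩
    · subst hwv; exact hbit w u (Ne.symm huv) hfs.symm hwu hbits.symm
    · subst hwu; exact hbit w v huv hfs hwv hbits
    · subst hwu; exact huv hwv
  · -- p_o ≤ χ₂
    obtain ⟨f, hf⟩ := Nat.sInf_mem hχne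
    apply Nat.sInf_le
    exact ⟨f, fun i u hu v hv huv w hw =>
      hf i u hu v hv huv w ⟨Or.inl hw.1, Or.inl hw.2⟩⟩
end

section
/- For any graphs G and H, p_o(G □ H) ≤ min{ p_o(G)·χ₂(H), χ₂(G)·p_o(H) }, where G □ H is the Cartesian product. -/
open SimpleGraph

variable {V W : Type*}

lemma aux_box {V W : Type*} (G : SimpleGraph V) (H : SimpleGraph W) (k m : ℕ)
    (f : V → Fin k) (hf : ∀ i, G.IsOpenPacking (f ⁻¹' {i}))
    (g : W → Fin m) (hg : ∀ i, H.IsPacking (g ⁻¹' {i})) :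
    ∃ F : V × W → Fin (k * m), ∀ i, (G □ H).IsOpenPacking (F ⁻¹' {i}) := by
  refine ⟨fun p => finProdFinEquiv (f p.1, g p.2), fun i => ?_⟩
  rintro ⟨u1, w1⟩ h1 ⟨u2, w2⟩ h2 hne ⟨x, y⟩ ⟨ha1, ha2⟩
  have heq : (f u1, g w1) = (f u2, g w2) := by
    have : finProdFinEquiv (f u1, g w1) = finProdFinEquiv (f u2, g w2) := by
      simpa using h1.trans h2.symm
    exact finProdFinEquiv.injective this
  have hfu : f u1 = f u2 := congrArg Prod.fst heq
  have hgw : g w1 = g w2 := congrArg Prod.snd heq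
  rw [boxProd_adj] at ha1 ha2
  rcases ha1 with ⟨hG1, hy1⟩ | ⟨hH1, hx1⟩ <;> rcases ha2 with ⟨hG2, hy2⟩ | ⟨hH2, hx2⟩
  · -- x common G-neighbor of u1, u2, w1 = w2 = y
    have hw : w1 = w2 := hy1.symm.trans hy2
    have hu : u1 ≠ u2 := fun h => hne (by rw [h, hw])
    exact hf (f u1) u1 rfl u2 (by simpa using hfu.symm) hu x ⟨hG1, hG2⟩
  · have hH2' : H.Adj w1 w2 := (show y = w1 from hy1) ▸ (show H.Adj y w2 from hH2)
    have hw : w1 ≠ w2 := fun h => H.loopless.irrefl w1 (h ▸ hH2')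
    exact hg (g w1) w1 rfl w2 (by simpa using hgw.symm) hw w1
      ⟨Or.inr rfl, Or.inl hH2'⟩
  · have hH1' : H.Adj w2 w1 := (show y = w2 from hy2) ▸ (show H.Adj y w1 from hH1)
    have hw : w1 ≠ w2 := fun h => H.loopless.irrefl w2 (h ▸ hH1')
    exact hg (g w1) w1 rfl w2 (by simpa using hgw.symm) hw w2
      ⟨Or.inl hH1', Or.inr rfl⟩
  · subst hx1; subst hx2
    have hw : w1 ≠ w2 := fun h => hne (by rw [h])
    exact hg (g w1) w1 rfl w2 (by simpa using hgw.symm) hw y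
      ⟨Or.inl hH1, Or.inl hH2⟩

lemma openP_nonempty {V : Type*} [Fintype V] (G : SimpleGraph V) :
    {k | ∃ f : V → Fin k, ∀ i, G.IsOpenPacking (f ⁻¹' {i})}.Nonempty := by
  refine ⟨Fintype.card V, Fintype.equivFin V, fun i u hu v hv hne w => ?_⟩
  exact absurd ((Fintype.equivFin V).injective (hu.trans hv.symm)) hne

lemma pack_nonempty {V : Type*} [Fintype V] (G : SimpleGraph V) :
    {k | ∃ f : V → Fin k, ∀ i, G.IsPacking (f ⁻¹' {i})}.Nonempty := by
  refine ⟨Fintype.card V, Fintype.equivFin V, fun i u hu v hv hne w => ?_⟩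
  exact absurd ((Fintype.equivFin V).injective (hu.trans hv.symm)) hne

theorem stmt_4 [Fintype V] [Fintype W] (G : SimpleGraph V) (H : SimpleGraph W) :
    (G □ H).openPackingPartitionNum ≤
      min (G.openPackingPartitionNum * H.twoDistChromaticNum)
        (G.twoDistChromaticNum * H.openPackingPartitionNum) := by
  have hG := Nat.sInf_mem (openP_nonempty G)
  have hH := Nat.sInf_mem (pack_nonempty H)
  have hG2 := Nat.sInf_mem (pack_nonempty G)
  have hH2 := Nat.sInf_mem (openP_nonempty H)
  obtain ⟨f, hf⟩ := hG
  obtain ⟨g, hg⟩ := hH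
  obtain ⟨f2, hf2⟩ := hG2
  obtain ⟨g2, hg2⟩ := hH2
  refine le_min ?_ ?_
  · exact Nat.sInf_le (aux_box G H _ _ f hf g hg)
  · have := aux_box H G _ _ g2 hg2 f2 hf2
    obtain ⟨F, hF⟩ := this
    refine Nat.sInf_le ⟨fun p => Fin.cast (Nat.mul_comm _ _) (F (p.2, p.1)), fun i => ?_⟩
    intro u hu v hv hne w hw
    refine hF (Fin.cast (Nat.mul_comm _ _) i) (u.2, u.1) ?_ (v.2, v.1) ?_
      (fun h => hne (Prod.ext (congrArg Prod.snd h) (congrArg Prod.fst h))) (w.2, w.1) ?_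
    · simp only [Set.mem_preimage, Set.mem_singleton_iff] at hu ⊢; subst hu; rfl
    · simp only [Set.mem_preimage, Set.mem_singleton_iff] at hv ⊢; subst hv; rfl
    · rw [boxProd_adj] at hw ⊢
      constructor
      · rcases hw.1 with ⟨h1, h2⟩ | ⟨h1, h2⟩
        · exact Or.inr ⟨h1, h2⟩
        · exact Or.inl ⟨h1, h2⟩
      · rcases hw.2 with ⟨h1, h2⟩ | ⟨h1, h2⟩
        · exact Or.inr ⟨h1, h2⟩
        · exact Or.inl ⟨h1, h2⟩
end

section
/- For any connected graph G of order n ≥ 2 with m edges, p_o(G) ≥ (1 + √(1 + 4(2m − n)/ρ_o(G)))/2. -/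
open SimpleGraph

variable {V W : Type*}

theorem stmt_9 [Fintype V] [DecidableEq V] (G : SimpleGraph V) [DecidableRel G.Adj]
    (hc : G.Connected) (hn : 2 ≤ Fintype.card V) :
    (1 + Real.sqrt (1 + 4 * (2 * (G.edgeFinset.card : ℝ) - Fintype.card V) /
        G.openPackingNum)) / 2 ≤ G.openPackingPartitionNum := by
  classical
  set n := Fintype.card V with hn'
  set m := G.edgeFinset.card with hm'
  -- nonemptiness of the partition set
  have hSne : {k | ∃ f : V → Fin k, ∀ i, G.IsOpenPacking (f ⁻¹' {i})}.Nonempty := by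
    refine ⟨n, (Fintype.equivFin V : V ≃ Fin n), ?_⟩
    intro i u hu v hv huv w
    simp only [Set.mem_preimage, Set.mem_singleton_iff] at hu hv
    exact absurd ((Fintype.equivFin V).injective (hu.trans hv.symm)) huv
  set k := G.openPackingPartitionNum with hk'
  obtain ⟨f, hf⟩ : ∃ f : V → Fin k, ∀ i, G.IsOpenPacking (f ⁻¹' {i}) := Nat.sInf_mem hSne
  have hVne : Nonempty V := Fintype.card_pos_iff.mp (by omega)
  have hk1 : 1 ≤ k := by
    rcases hVne with ⟨v⟩
    exact Nat.pos_of_ne_zero (fun h => (h ▸ f v).elim0)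
  set ρ := G.openPackingNum with hρ'
  have hbdd : BddAbove {n | ∃ B : Finset V, G.IsOpenPacking ↑B ∧ B.card = n} := by
    refine ⟨Fintype.card V, fun x hx => ?_⟩
    obtain ⟨B, _, hB⟩ := hx
    exact hB ▸ B.card_le_univ
  have hρB : ∀ B : Finset V, G.IsOpenPacking ↑B → B.card ≤ ρ := fun B h =>
    le_csSup hbdd ⟨B, h, rfl⟩
  have hρ1 : 1 ≤ ρ := by
    rcases hVne with ⟨v⟩
    have := hρB {v} (by
      intro u hu w hw huw x
      simp only [Finset.coe_singleton, Set.mem_singleton_iff] at hu hw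
      exact absurd (hu.trans hw.symm) huw)
    simpa using this
  -- the parts
  set B : Fin k → Finset V := fun i => Finset.univ.filter (fun v => f v = i) with hB'
  have hBop : ∀ i, G.IsOpenPacking ↑(B i) := by
    intro i u hu v hv huv w
    simp only [hB', Finset.coe_filter, Finset.mem_univ, true_and, Set.mem_setOf_eq] at hu hv
    exact hf i u (by simp [hu]) v (by simp [hv]) huv w
  have hBcard : ∀ i, (B i).card ≤ ρ := fun i => hρB _ (hBop i)
  have hBsum : ∑ i, (B i).card = n := by
    rw [hn', ← Finset.card_univ]
    exact (Finset.card_eq_sum_card_fiberwise (fun x _ => Finset.mem_univ (f x))).symm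
  -- the local counts
  set c : V → Fin k → ℕ := fun u j => ((G.neighborFinset u).filter (fun v => f v = j)).card
    with hc'
  have hc1 : ∀ u j, c u j ≤ 1 := by
    intro u j
    refine Finset.card_le_one.mpr (fun a ha b hb => ?_)
    simp only [Finset.mem_filter, mem_neighborFinset] at ha hb
    by_contra hab
    exact hf j a (by simp [ha.2]) b (by simp [hb.2]) hab u ⟨ha.1, hb.1⟩
  have hdeg : ∀ u, G.degree u = ∑ j, c u j := by
    intro u
    exact Finset.card_eq_sum_card_fiberwise (fun x _ => Finset.mem_univ (f x))
  -- per-part sums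
  have hS1 : ∀ i j, ∑ u ∈ B i, c u j ≤ (B i).card := by
    intro i j
    calc ∑ u ∈ B i, c u j ≤ (B i).card • 1 :=
          Finset.sum_le_card_nsmul _ _ 1 (fun u _ => hc1 u j)
      _ = (B i).card := by simp
  have hmain : 2 * m ≤ n + k * ((k - 1) * ρ) := by
    have h1 : 2 * m = ∑ u, G.degree u := (G.sum_degrees_eq_twice_card_edges).symm
    have h2 : ∑ u, G.degree u = ∑ i, ∑ u ∈ B i, ∑ j, c u j := by
      rw [Finset.sum_fiberwise_of_maps_to (fun x _ => Finset.mem_univ (f x))]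
      exact Finset.sum_congr rfl (fun u _ => hdeg u)
    have h3 : ∀ i, ∑ u ∈ B i, ∑ j, c u j ≤ (B i).card + (k - 1) * ρ := by
      intro i
      rw [Finset.sum_comm]
      have hsplit : ∑ j, ∑ u ∈ B i, c u j
          = ∑ j ∈ Finset.univ.erase i, (∑ u ∈ B i, c u j) + ∑ u ∈ B i, c u i :=
        (Finset.sum_erase_add _ _ (Finset.mem_univ i)).symm
      rw [hsplit]
      have hoff : ∑ j ∈ Finset.univ.erase i, (∑ u ∈ B i, c u j) ≤ (k - 1) * ρ := by
        calc ∑ j ∈ Finset.univ.erase i, (∑ u ∈ B i, c u j)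
            ≤ (Finset.univ.erase i).card • ρ :=
              Finset.sum_le_card_nsmul _ _ ρ (fun j _ => le_trans (hS1 i j) (hBcard i))
          _ = (k - 1) * ρ := by
              rw [Finset.card_erase_of_mem (Finset.mem_univ i)]
              simp [smul_eq_mul]
      have hd := hS1 i i
      omega
    calc 2 * m = ∑ i, ∑ u ∈ B i, ∑ j, c u j := by rw [h1, h2]
      _ ≤ ∑ i : Fin k, ((B i).card + (k - 1) * ρ) := Finset.sum_le_sum (fun i _ => h3 i)
      _ = n + k * ((k - 1) * ρ) := by
          rw [Finset.sum_add_distrib, hBsum, Finset.sum_const, Finset.card_univ,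
            Fintype.card_fin, smul_eq_mul]
  -- pass to the reals
  have hKR : (1 : ℝ) ≤ (k : ℝ) := by exact_mod_cast hk1
  have hRR : (1 : ℝ) ≤ (ρ : ℝ) := by exact_mod_cast hρ1
  have h2R : 2 * (m : ℝ) ≤ n + (k : ℝ) * ((k : ℝ) - 1) * (ρ : ℝ) := by
    have := hmain
    have hcast : ((k - 1 : ℕ) : ℝ) = (k : ℝ) - 1 := by
      rw [Nat.cast_sub hk1]; norm_num
    calc 2 * (m : ℝ) ≤ ((n + k * ((k - 1) * ρ) : ℕ) : ℝ) := by exact_mod_cast this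
      _ = n + (k : ℝ) * ((k : ℝ) - 1) * (ρ : ℝ) := by push_cast [hcast]; ring
  have hRpos : (0 : ℝ) < (ρ : ℝ) := by linarith
  have hsq : Real.sqrt (1 + 4 * (2 * (m : ℝ) - n) / ρ) ≤ 2 * (k : ℝ) - 1 := by
    have hdiv : (2 * (m : ℝ) - n) / ρ ≤ (k : ℝ) * ((k : ℝ) - 1) :=
      (div_le_iff₀ hRpos).mpr (by nlinarith)
    have h4 : 1 + 4 * (2 * (m : ℝ) - n) / ρ ≤ (2 * (k : ℝ) - 1) ^ 2 := by
      have : 4 * (2 * (m : ℝ) - n) / ρ = 4 * ((2 * (m : ℝ) - n) / ρ) := by ring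
      rw [this]
      nlinarith
    calc Real.sqrt (1 + 4 * (2 * (m : ℝ) - n) / ρ)
        ≤ Real.sqrt ((2 * (k : ℝ) - 1) ^ 2) := Real.sqrt_le_sqrt h4
      _ = 2 * (k : ℝ) - 1 := Real.sqrt_sq (by linarith)
  rw [div_le_iff₀ (by norm_num : (0:ℝ) < 2)]
  linarith
end

section
/- For any graph G of order n that is not isomorphic to C₄ or to 2P₂ (the disjoint union of two edges), p_o(G) + p_o(Ḡ) ≥ n, where Ḡ is the complement of G. -/
open SimpleGraph

variable {V W : Type*}

section Tools
variable [Fintype V] (G : SimpleGraph V)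

lemma feas_nonempty : ∃ k, k ∈ {k | ∃ f : V → Fin k, ∀ i, G.IsOpenPacking (f ⁻¹' {i})} := by
  classical
  refine ⟨Fintype.card V, ⇑(Fintype.equivFin V), fun i u hu v hv huv w hw => ?_⟩
  exact huv ((Fintype.equivFin V).injective (hu.trans hv.symm))

lemma opp_exists_fun : ∃ f : V → Fin (G.openPackingPartitionNum),
    ∀ i, G.IsOpenPacking (f ⁻¹' {i}) :=
  Nat.sInf_mem (feas_nonempty G)

lemma opp_pos (v0 : V) : 1 ≤ G.openPackingPartitionNum := by
  obtain ⟨f, _⟩ := opp_exists_fun G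
  rcases Nat.eq_zero_or_pos G.openPackingPartitionNum with h0 | h
  · exact ((h0 ▸ f v0) : Fin 0).elim0
  · exact h

/-- clique bound -/
lemma clique_bound (T : Finset V)
    (h : ∀ u ∈ T, ∀ v ∈ T, u ≠ v → ∃ w, G.Adj w u ∧ G.Adj w v) :
    T.card ≤ G.openPackingPartitionNum := by
  classical
  obtain ⟨f, hf⟩ := opp_exists_fun G
  have : T.card ≤ (Finset.univ : Finset (Fin G.openPackingPartitionNum)).card := by
    apply Finset.card_le_card_of_injOn f (fun x _ => Finset.mem_univ _)
    intro u hu v hv hfuv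
    by_contra hne
    obtain ⟨w, hw⟩ := h u hu v hv hne
    exact hf (f u) u rfl v hfuv.symm hne w hw
  simpa using this

/-- fiber bound -/
lemma fiber_bound
    (hno : ¬ ∃ x y z : V, x ≠ y ∧ x ≠ z ∧ y ≠ z ∧ G.IsOpenPacking {x, y, z}) :
    Fintype.card V ≤ 2 * G.openPackingPartitionNum := by
  classical
  obtain ⟨f, hf⟩ := opp_exists_fun G
  have hcard : Fintype.card V =
      ∑ i : Fin G.openPackingPartitionNum, (Finset.univ.filter (fun x => f x = i)).card := by
    rw [← Finset.card_univ]
    exact Finset.card_eq_sum_card_fiberwise (fun x _ => Finset.mem_univ _)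
  have hle : ∀ i : Fin G.openPackingPartitionNum,
      (Finset.univ.filter (fun x => f x = i)).card ≤ 2 := by
    intro i
    by_contra h
    push_neg at h
    obtain ⟨x, y, z, hx, hy, hz, hxy, hxz, hyz⟩ := Finset.two_lt_card_iff.mp h
    simp only [Finset.mem_filter] at hx hy hz
    refine hno ⟨x, y, z, hxy, hxz, hyz, fun u hu v hv huv w hw => ?_⟩
    have hmem : ∀ a ∈ ({x, y, z} : Set V), f a = i := by
      rintro a (rfl | rfl | rfl)
      exacts [hx.2, hy.2, hz.2]
    exact hf i u (hmem u hu) v (hmem v hv) huv w hw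
  calc Fintype.card V = _ := hcard
    _ ≤ ∑ _i : Fin G.openPackingPartitionNum, 2 := Finset.sum_le_sum (fun i _ => hle i)
    _ = 2 * G.openPackingPartitionNum := by simp [mul_comm]

omit [Fintype V] in
lemma feas_mono {k m : ℕ} (hk : ∃ f : V → Fin k, ∀ i, G.IsOpenPacking (f ⁻¹' {i}))
    (hkm : k ≤ m) : ∃ f : V → Fin m, ∀ i, G.IsOpenPacking (f ⁻¹' {i}) := by
  obtain ⟨f, hf⟩ := hk
  refine ⟨fun x => Fin.castLE hkm (f x), fun i u hu v hv huv w hw => ?_⟩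
  have : f u = f v := Fin.castLE_injective hkm (hu.trans hv.symm)
  exact hf (f u) u rfl v this.symm huv w hw

end Tools

section NoBoth
variable (G : SimpleGraph V)

/-- three distinct vertices pairwise with no common neighbor, in both G and Gᶜ: impossible -/
lemma bothPack (a b c : V) (hab : a ≠ b) (hac : a ≠ c) (hbc : b ≠ c)
    (nab : ∀ w, ¬(G.Adj w a ∧ G.Adj w b))
    (nac : ∀ w, ¬(G.Adj w a ∧ G.Adj w c))
    (nbc : ∀ w, ¬(G.Adj w b ∧ G.Adj w c))
    (mab : ∀ w, ¬(Gᶜ.Adj w a ∧ Gᶜ.Adj w b))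
    (mac : ∀ w, ¬(Gᶜ.Adj w a ∧ Gᶜ.Adj w c))
    (mbc : ∀ w, ¬(Gᶜ.Adj w b ∧ Gᶜ.Adj w c)) : False := by
  have hcab : G.Adj c a ∨ G.Adj c b := by
    have := mab c
    simp only [compl_adj] at this
    tauto
  have habc : G.Adj a b ∨ G.Adj a c := by
    have := mbc a
    simp only [compl_adj] at this
    tauto
  have hbac : G.Adj b a ∨ G.Adj b c := by
    have := mac b
    simp only [compl_adj] at this
    tauto
  rcases hcab with h1 | h1
  · rcases hbac with h2 | h2
    · exact nbc a ⟨h2.symm, h1.symm⟩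
    · exact nab c ⟨h1, h2.symm⟩
  · rcases habc with h2 | h2
    · exact nac b ⟨h2.symm, h1.symm⟩
    · exact nab c ⟨h2.symm, h1⟩

/-- core: T = {a,b,t} is a Gᶜ-3-packing, c ∉ T, S-facts ⇒ False -/
lemma inner_case (a b c t : V)
    (hab : a ≠ b) (hat : a ≠ t) (hbt : b ≠ t)
    (hca : c ≠ a) (hcb : c ≠ b) (hct : c ≠ t)
    (nab : ∀ w, ¬(G.Adj w a ∧ G.Adj w b))
    (nac : ∀ w, ¬(G.Adj w a ∧ G.Adj w c))
    (nbc : ∀ w, ¬(G.Adj w b ∧ G.Adj w c))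
    (mab : ∀ w, ¬(Gᶜ.Adj w a ∧ Gᶜ.Adj w b))
    (mat : ∀ w, ¬(Gᶜ.Adj w a ∧ Gᶜ.Adj w t))
    (mbt : ∀ w, ¬(Gᶜ.Adj w b ∧ Gᶜ.Adj w t)) : False := by
  have h1 : G.Adj c a ∨ G.Adj c b := by
    have := mab c; simp only [compl_adj] at this; tauto
  have h2 : G.Adj c a ∨ G.Adj c t := by
    have := mat c; simp only [compl_adj] at this; tauto
  have h3 : G.Adj c b ∨ G.Adj c t := by
    have := mbt c; simp only [compl_adj] at this; tauto
  have hb : G.Adj b a ∨ G.Adj b t := by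
    have := mat b; simp only [compl_adj] at this
    have h' : b ≠ a := hab.symm
    tauto
  have ha : G.Adj a b ∨ G.Adj a t := by
    have := mbt a; simp only [compl_adj] at this; tauto
  -- cases: at least two of (ca, cb, ct)
  by_cases hca' : G.Adj c a
  · by_cases hcb' : G.Adj c b
    · exact nab c ⟨hca', hcb'⟩
    · have hct' : G.Adj c t := by tauto
      rcases hb with h | h
      · exact nbc a ⟨h.symm, hca'.symm⟩
      · exact nbc t ⟨h.symm, hct'.symm⟩
  · have hcb' : G.Adj c b := by tauto
    have hct' : G.Adj c t := by tauto
    rcases ha with h | h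
    · exact nac b ⟨h.symm, hcb'.symm⟩
    · exact nac t ⟨h.symm, hct'.symm⟩

/-- two vertices of S outside T ⇒ False -/
lemma outer_case (s s' d e f : V)
    (hss : s ≠ s')
    (nss : ∀ w, ¬(G.Adj w s ∧ G.Adj w s'))
    (hsd : s ≠ d) (hse : s ≠ e) (hsf : s ≠ f)
    (hsd' : s' ≠ d) (hse' : s' ≠ e) (hsf' : s' ≠ f)
    (mde : ∀ w, ¬(Gᶜ.Adj w d ∧ Gᶜ.Adj w e))
    (mdf : ∀ w, ¬(Gᶜ.Adj w d ∧ Gᶜ.Adj w f))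
    (mef : ∀ w, ¬(Gᶜ.Adj w e ∧ Gᶜ.Adj w f)) : False := by
  have q : ∀ x : V, x ≠ d → x ≠ e → x ≠ f →
      (G.Adj x d ∧ G.Adj x e) ∨ (G.Adj x d ∧ G.Adj x f) ∨ (G.Adj x e ∧ G.Adj x f) := by
    intro x h1 h2 h3
    have hde := mde x; have hdf := mdf x; have hef := mef x
    simp only [compl_adj] at hde hdf hef
    tauto
  obtain h1 := q s hsd hse hsf
  obtain h2 := q s' hsd' hse' hsf'
  rcases h1 with ⟨u1, u2⟩ | ⟨u1, u2⟩ | ⟨u1, u2⟩ <;>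
    rcases h2 with ⟨v1, v2⟩ | ⟨v1, v2⟩ | ⟨v1, v2⟩ <;>
    first
      | exact nss d ⟨u1.symm, v1.symm⟩
      | exact nss e ⟨u2.symm, v1.symm⟩
      | exact nss e ⟨u1.symm, v1.symm⟩
      | exact nss e ⟨u2.symm, v2.symm⟩
      | exact nss e ⟨u1.symm, v2.symm⟩
      | exact nss f ⟨u2.symm, v2.symm⟩
      | exact nss f ⟨u2.symm, v1.symm⟩
      | exact nss f ⟨u1.symm, v2.symm⟩
end NoBoth

section NB2
variable (G : SimpleGraph V)

/-- helper: transfer Gᶜ pair facts along membership in {d,e,f} -/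
lemma pair_trans (d e f x y : V) (hxy : x ≠ y)
    (hx : x = d ∨ x = e ∨ x = f) (hy : y = d ∨ y = e ∨ y = f)
    (mde : ∀ w, ¬(Gᶜ.Adj w d ∧ Gᶜ.Adj w e))
    (mdf : ∀ w, ¬(Gᶜ.Adj w d ∧ Gᶜ.Adj w f))
    (mef : ∀ w, ¬(Gᶜ.Adj w e ∧ Gᶜ.Adj w f)) :
    ∀ w, ¬(Gᶜ.Adj w x ∧ Gᶜ.Adj w y) := by
  intro w hw
  rcases hx with rfl | rfl | rfl <;> rcases hy with rfl | rfl | rfl <;>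
    first
      | exact hxy rfl
      | exact mde w hw
      | exact mde w ⟨hw.2, hw.1⟩
      | exact mdf w hw
      | exact mdf w ⟨hw.2, hw.1⟩
      | exact mef w hw
      | exact mef w ⟨hw.2, hw.1⟩

/-- if {a,b} ⊆ {d,e,f}, a≠b, then the remaining element t satisfies the inner_case setup -/
lemma third_elt (d e f a b : V) (hde : d ≠ e) (hdf : d ≠ f) (hef : e ≠ f)
    (hab : a ≠ b) (ha : a = d ∨ a = e ∨ a = f) (hb : b = d ∨ b = e ∨ b = f) :
    ∃ t, (t = d ∨ t = e ∨ t = f) ∧ a ≠ t ∧ b ≠ t := by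
  rcases ha with rfl | rfl | rfl <;> rcases hb with rfl | rfl | rfl
  · exact absurd rfl hab
  · exact ⟨f, by tauto, hdf, hef⟩
  · exact ⟨e, by tauto, hde, hef.symm⟩
  · exact ⟨f, by tauto, hef, hdf⟩
  · exact absurd rfl hab
  · exact ⟨d, by tauto, hde.symm, hdf.symm⟩
  · exact ⟨e, by tauto, hef.symm, hde⟩
  · exact ⟨d, by tauto, hdf.symm, hde.symm⟩
  · exact absurd rfl hab

lemma noBoth (a b c d e f : V)
    (hab : a ≠ b) (hac : a ≠ c) (hbc : b ≠ c)
    (nab : ∀ w, ¬(G.Adj w a ∧ G.Adj w b))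
    (nac : ∀ w, ¬(G.Adj w a ∧ G.Adj w c))
    (nbc : ∀ w, ¬(G.Adj w b ∧ G.Adj w c))
    (hde : d ≠ e) (hdf : d ≠ f) (hef : e ≠ f)
    (mde : ∀ w, ¬(Gᶜ.Adj w d ∧ Gᶜ.Adj w e))
    (mdf : ∀ w, ¬(Gᶜ.Adj w d ∧ Gᶜ.Adj w f))
    (mef : ∀ w, ¬(Gᶜ.Adj w e ∧ Gᶜ.Adj w f)) : False := by
  classical
  by_cases ha : a = d ∨ a = e ∨ a = f
  · by_cases hb : b = d ∨ b = e ∨ b = f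
    · by_cases hc : c = d ∨ c = e ∨ c = f
      · -- all of a,b,c in T: bothPack
        exact bothPack G a b c hab hac hbc nab nac nbc
          (pair_trans G d e f a b hab ha hb mde mdf mef)
          (pair_trans G d e f a c hac ha hc mde mdf mef)
          (pair_trans G d e f b c hbc hb hc mde mdf mef)
      · -- c outside, a b in T
        push_neg at hc
        obtain ⟨t, ht, hat, hbt⟩ := third_elt d e f a b hde hdf hef hab ha hb
        have hct : c ≠ t := by
          rcases ht with rfl | rfl | rfl
          exacts [hc.1, hc.2.1, hc.2.2]
        refine inner_case G a b c t hab hat hbt hac.symm hbc.symm hct nab nac nbc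
          (pair_trans G d e f a b hab ha hb mde mdf mef)
          (pair_trans G d e f a t hat ha ht mde mdf mef)
          (pair_trans G d e f b t hbt hb ht mde mdf mef)
    · -- b outside
      push_neg at hb
      by_cases hc : c = d ∨ c = e ∨ c = f
      · -- b outside, a c in T; roles: x=a, y=c, outside=b
        obtain ⟨t, ht, hat, hct⟩ := third_elt d e f a c hde hdf hef hac ha hc
        have hbt : b ≠ t := by
          rcases ht with rfl | rfl | rfl
          exacts [hb.1, hb.2.1, hb.2.2]
        refine inner_case G a c b t hac hat hct hab.symm hbc hbt nac
          (fun w hw => nab w ⟨hw.1, hw.2⟩)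
          (fun w hw => nbc w ⟨hw.2, hw.1⟩)
          (pair_trans G d e f a c hac ha hc mde mdf mef)
          (pair_trans G d e f a t hat ha ht mde mdf mef)
          (pair_trans G d e f c t hct hc ht mde mdf mef)
      · -- b, c both outside
        push_neg at hc
        exact outer_case G b c d e f hbc nbc hb.1 hb.2.1 hb.2.2 hc.1 hc.2.1 hc.2.2 mde mdf mef
  · push_neg at ha
    by_cases hb : b = d ∨ b = e ∨ b = f
    · by_cases hc : c = d ∨ c = e ∨ c = f
      · -- a outside, b c in T
        obtain ⟨t, ht, hbt, hct⟩ := third_elt d e f b c hde hdf hef hbc hb hc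
        have hat : a ≠ t := by
          rcases ht with rfl | rfl | rfl
          exacts [ha.1, ha.2.1, ha.2.2]
        refine inner_case G b c a t hbc hbt hct hab hac hat nbc
          (fun w hw => nab w ⟨hw.2, hw.1⟩)
          (fun w hw => nac w ⟨hw.2, hw.1⟩)
          (pair_trans G d e f b c hbc hb hc mde mdf mef)
          (pair_trans G d e f b t hbt hb ht mde mdf mef)
          (pair_trans G d e f c t hct hc ht mde mdf mef)
      · push_neg at hc
        exact outer_case G a c d e f hac nac ha.1 ha.2.1 ha.2.2 hc.1 hc.2.1 hc.2.2 mde mdf mef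
    · push_neg at hb
      exact outer_case G a b d e f hab nab ha.1 ha.2.1 ha.2.2 hb.1 hb.2.1 hb.2.2 mde mdf mef
end NB2

section Iso4
lemma iso2P2_of [Fintype V] (G : SimpleGraph V) (u v w1 w2 : V)
    (huv : u ≠ v) (huw1 : u ≠ w1) (huw2 : u ≠ w2) (hvw1 : v ≠ w1) (hvw2 : v ≠ w2)
    (hw12 : w1 ≠ w2) (hcard : Fintype.card V = 4)
    (h1 : G.Adj w1 u) (h2 : G.Adj w2 v)
    (e1 : ¬G.Adj u v) (e2 : ¬G.Adj u w2) (e3 : ¬G.Adj v w1) (e4 : ¬G.Adj w1 w2) :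
    Nonempty (G ≃g ((⊤ : SimpleGraph (Fin 2)) ⊕g (⊤ : SimpleGraph (Fin 2)))) := by
  classical
  let g : Fin 2 ⊕ Fin 2 → V :=
    Sum.elim (fun i => if i = 0 then u else w1) (fun i => if i = 0 then v else w2)
  have hginj : Function.Injective g := by
    intro s t hst
    rcases s with s | s <;> rcases t with t | t <;> fin_cases s <;> fin_cases t <;>
      simp only [g, Sum.elim_inl, Sum.elim_inr] at hst <;> simp_all <;>
      first
        | rfl
        | exact absurd hst huv | exact absurd hst huw1 | exact absurd hst huw2
        | exact absurd hst hvw1 | exact absurd hst hvw2 | exact absurd hst hw12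
        | exact absurd hst.symm huv | exact absurd hst.symm huw1 | exact absurd hst.symm huw2
        | exact absurd hst.symm hvw1 | exact absurd hst.symm hvw2 | exact absurd hst.symm hw12
  have hbij : Function.Bijective g :=
    (Fintype.bijective_iff_injective_and_card g).mpr ⟨hginj, by simp [hcard]⟩
  let e := Equiv.ofBijective g hbij
  have h1' := h1.symm
  have h2' := h2.symm
  have e1' : ¬G.Adj v u := fun h => e1 h.symm
  have e2' : ¬G.Adj w2 u := fun h => e2 h.symm
  have e3' : ¬G.Adj w1 v := fun h => e3 h.symm
  have e4' : ¬G.Adj w2 w1 := fun h => e4 h.symm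
  refine ⟨(RelIso.mk e ?_ : ((⊤ : SimpleGraph (Fin 2)) ⊕g (⊤ : SimpleGraph (Fin 2))) ≃g G).symm⟩
  intro s t
  rcases s with s | s <;> rcases t with t | t <;> fin_cases s <;> fin_cases t <;>
    simp_all [e, g, Equiv.ofBijective]
end Iso4

section Main
lemma main' [Fintype V] (G : SimpleGraph V) (a b c : V)
    (hab : a ≠ b) (hac : a ≠ c) (hbc : b ≠ c)
    (nab : ∀ w, ¬(G.Adj w a ∧ G.Adj w b))
    (nac : ∀ w, ¬(G.Adj w a ∧ G.Adj w c))
    (nbc : ∀ w, ¬(G.Adj w b ∧ G.Adj w c))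
    (h2P2 : ¬Nonempty (G ≃g ((⊤ : SimpleGraph (Fin 2)) ⊕g (⊤ : SimpleGraph (Fin 2))))) :
    Fintype.card V ≤ G.openPackingPartitionNum + Gᶜ.openPackingPartitionNum := by
  classical
  set n := Fintype.card V with hn
  have hcard3 : ({a, b, c} : Finset V).card = 3 := by
    rw [Finset.card_insert_of_notMem (by simp [hab, hac]),
      Finset.card_insert_of_notMem (by simp [hbc]), Finset.card_singleton]
  have hn3 : 3 ≤ n := hcard3 ▸ Finset.card_le_univ _
  -- Clique 1 : vertices outside {a,b,c} are pairwise adjacent in twoStep Gᶜ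
  have hsplit : ∀ u v : V, u ∉ ({a, b, c} : Finset V) → v ∉ ({a, b, c} : Finset V) →
      u ≠ v → ∃ w, Gᶜ.Adj w u ∧ Gᶜ.Adj w v := by
    intro u v hu hv huv
    simp only [Finset.mem_insert, Finset.mem_singleton, not_or] at hu hv
    by_contra hno
    push_neg at hno
    have key : ∀ s : V, s ≠ u → s ≠ v → G.Adj s u ∨ G.Adj s v := by
      intro s hsu hsv
      by_contra h'
      push_neg at h'
      exact hno s ⟨hsu, h'.1⟩ ⟨hsv, h'.2⟩
    have hA := key a (fun h => hu.1 h.symm) (fun h => hv.1 h.symm)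
    have hB := key b (fun h => hu.2.1 h.symm) (fun h => hv.2.1 h.symm)
    have hC := key c (fun h => hu.2.2 h.symm) (fun h => hv.2.2 h.symm)
    rcases hA with h1 | h1 <;> rcases hB with h2 | h2 <;> rcases hC with h3 | h3 <;>
      first
        | exact nab u ⟨h1.symm, h2.symm⟩
        | exact nab v ⟨h1.symm, h2.symm⟩
        | exact nac u ⟨h1.symm, h3.symm⟩
        | exact nac v ⟨h1.symm, h3.symm⟩
        | exact nbc u ⟨h2.symm, h3.symm⟩
        | exact nbc v ⟨h2.symm, h3.symm⟩
  have hc1 : n - 3 ≤ Gᶜ.openPackingPartitionNum := by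
    have hcb := clique_bound Gᶜ (Finset.univ \ {a, b, c}) (fun u hu v hv huv =>
      hsplit u v (Finset.mem_sdiff.mp hu).2 (Finset.mem_sdiff.mp hv).2 huv)
    rwa [Finset.card_sdiff_of_subset (Finset.subset_univ _), Finset.card_univ, hcard3] at hcb
  by_cases h3 : ∃ z x y w : V, x ≠ y ∧ x ≠ w ∧ y ≠ w ∧ G.Adj z x ∧ G.Adj z y ∧ G.Adj z w
  · -- max degree ≥ 3 : p_o(G) ≥ 3
    obtain ⟨z, x, y, w, hxy, hxw, hyw, g1, g2, g3⟩ := h3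
    have hcard3' : ({x, y, w} : Finset V).card = 3 := by
      rw [Finset.card_insert_of_notMem (by simp [hxy, hxw]),
        Finset.card_insert_of_notMem (by simp [hyw]), Finset.card_singleton]
    have hpg : 3 ≤ G.openPackingPartitionNum := by
      have hcb := clique_bound G {x, y, w} (fun s hs t ht hst => by
        refine ⟨z, ?_, ?_⟩ <;>
        · first
            | (rcases Finset.mem_insert.mp hs with rfl | hs' <;>
                [skip; rcases Finset.mem_insert.mp hs' with rfl | hs'' <;>
                  [skip; rw [Finset.mem_singleton.mp hs'']]] <;> assumption)
            | (rcases Finset.mem_insert.mp ht with rfl | ht' <;>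
                [skip; rcases Finset.mem_insert.mp ht' with rfl | ht'' <;>
                  [skip; rw [Finset.mem_singleton.mp ht'']]] <;> assumption))
      rwa [hcard3'] at hcb
    omega
  · -- max degree ≤ 2
    have hdeg2 : ∀ z : V, (G.neighborFinset z).card ≤ 2 := by
      intro z
      by_contra h
      push_neg at h
      obtain ⟨x, y, w, hx, hy, hw, hxy, hxw, hyw⟩ := Finset.two_lt_card_iff.mp h
      rw [SimpleGraph.mem_neighborFinset] at hx hy hw
      exact h3 ⟨z, x, y, w, hxy, hxw, hyw, hx, hy, hw⟩
    by_cases h7 : 7 ≤ n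
    · -- twoStep Gᶜ is complete
      have hcomp : ∀ u v : V, u ≠ v → ∃ w, Gᶜ.Adj w u ∧ Gᶜ.Adj w v := by
        intro u v huv
        set F : Finset V := insert u (insert v (G.neighborFinset u ∪ G.neighborFinset v)) with hF
        have hFcard : F.card ≤ 6 := by
          calc F.card ≤ (insert v (G.neighborFinset u ∪ G.neighborFinset v)).card + 1 :=
                Finset.card_insert_le _ _
            _ ≤ ((G.neighborFinset u ∪ G.neighborFinset v).card + 1) + 1 := by
                have := Finset.card_insert_le v (G.neighborFinset u ∪ G.neighborFinset v)
                omega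
            _ ≤ 6 := by
                have := Finset.card_union_le (G.neighborFinset u) (G.neighborFinset v)
                have := hdeg2 u
                have := hdeg2 v
                omega
        have hpos : 0 < Fᶜ.card := by
          rw [Finset.card_compl]
          omega
        obtain ⟨w, hw⟩ := Finset.card_pos.mp hpos
        rw [Finset.mem_compl, hF] at hw
        simp only [Finset.mem_insert, Finset.mem_union, SimpleGraph.mem_neighborFinset,
          not_or] at hw
        exact ⟨w, ⟨fun h => hw.1 h, fun h => hw.2.2.1 h.symm⟩,
          ⟨fun h => hw.2.1 h, fun h => hw.2.2.2 h.symm⟩⟩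
      have hpc : n ≤ Gᶜ.openPackingPartitionNum := by
        have hcb := clique_bound Gᶜ Finset.univ (fun u _ v _ huv => hcomp u v huv)
        rwa [Finset.card_univ] at hcb
      omega
    · push_neg at h7
      by_cases hd2 : ∃ z x y : V, x ≠ y ∧ G.Adj z x ∧ G.Adj z y
      · -- a vertex of degree 2 : p_o(G) ≥ 2
        obtain ⟨z, x, y, hxy, hzx, hzy⟩ := hd2
        have hpg2 : 2 ≤ G.openPackingPartitionNum := by
          have hcb := clique_bound G {x, y} (fun s hs t ht hst => by
            refine ⟨z, ?_, ?_⟩ <;>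
            · first
                | (rcases Finset.mem_insert.mp hs with rfl | hs' <;>
                    [skip; rw [Finset.mem_singleton.mp hs']] <;> assumption)
                | (rcases Finset.mem_insert.mp ht with rfl | ht' <;>
                    [skip; rw [Finset.mem_singleton.mp ht']] <;> assumption))
          rwa [Finset.card_insert_of_notMem (by simp [hxy]), Finset.card_singleton] at hcb
        by_cases hT : ∃ p q r : V, p ≠ q ∧ p ≠ r ∧ q ≠ r ∧
            (∀ w, ¬(Gᶜ.Adj w p ∧ Gᶜ.Adj w q)) ∧ (∀ w, ¬(Gᶜ.Adj w p ∧ Gᶜ.Adj w r)) ∧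
            (∀ w, ¬(Gᶜ.Adj w q ∧ Gᶜ.Adj w r))
        · obtain ⟨p, q, r, hpq, hpr, hqr, m1, m2, m3⟩ := hT
          exact (noBoth G a b c p q r hab hac hbc nab nac nbc hpq hpr hqr m1 m2 m3).elim
        · -- every Gᶜ open packing has size ≤ 2
          have hfb : n ≤ 2 * Gᶜ.openPackingPartitionNum := by
            apply fiber_bound
            rintro ⟨p, q, r, hpq, hpr, hqr, hpack⟩
            refine hT ⟨p, q, r, hpq, hpr, hqr, ?_, ?_, ?_⟩
            · exact fun w => hpack p (by simp) q (by simp) hpq w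
            · exact fun w => hpack p (by simp) r (by simp) hpr w
            · exact fun w => hpack q (by simp) r (by simp) hqr w
          by_cases hn5 : n ≤ 5
          · omega
          · have hn6 : n = 6 := by omega
            have hpc4 : 4 ≤ Gᶜ.openPackingPartitionNum := by
              by_contra hlt
              push_neg at hlt
              obtain ⟨f, hf⟩ := feas_mono Gᶜ (opp_exists_fun Gᶜ) (by omega :
                Gᶜ.openPackingPartitionNum ≤ 3)
              -- fibers all have size exactly 2
              have hsum : ∑ i : Fin 3, (Finset.univ.filter (fun x => f x = i)).card = 6 := by
                have h0 : (Finset.univ : Finset V).card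
                    = ∑ i : Fin 3, (Finset.univ.filter (fun x => f x = i)).card :=
                  Finset.card_eq_sum_card_fiberwise (fun x _ => Finset.mem_univ _)
                rw [Finset.card_univ, ← hn, hn6] at h0
                exact h0.symm
              have hfle : ∀ i : Fin 3, (Finset.univ.filter (fun x => f x = i)).card ≤ 2 := by
                intro i
                by_contra h'
                push_neg at h'
                obtain ⟨p, q, r, hp, hq, hr, hpq, hpr, hqr⟩ := Finset.two_lt_card_iff.mp h'
                simp only [Finset.mem_filter] at hp hq hr
                refine hT ⟨p, q, r, hpq, hpr, hqr,
                  fun w => hf i p hp.2 q hq.2 hpq w,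
                  fun w => hf i p hp.2 r hr.2 hpr w,
                  fun w => hf i q hq.2 r hr.2 hqr w⟩
              have hfeq : ∀ i : Fin 3, (Finset.univ.filter (fun x => f x = i)).card = 2 := by
                intro i
                have h0 := hfle 0
                have h1 := hfle 1
                have h2 := hfle 2
                have hge : 2 ≤ (Finset.univ.filter (fun x => f x = i)).card := by
                  by_contra hsm
                  push_neg at hsm
                  have hlt : ∑ j : Fin 3, (Finset.univ.filter (fun x => f x = j)).card
                      < ∑ _j : Fin 3, 2 :=
                    Finset.sum_lt_sum (fun j _ => hfle j) ⟨i, Finset.mem_univ i, by omega⟩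
                  simp only [Finset.sum_const, Finset.card_univ, Fintype.card_fin,
                    smul_eq_mul] at hlt
                  omega
                have := hfle i
                omega
              -- every vertex has a partner
              have hpart : ∀ u : V, ∃ v, v ≠ u ∧
                  ∀ w, w ≠ u → w ≠ v → G.Adj w u ∨ G.Adj w v := by
                intro u
                obtain ⟨p, q, hpq, hset⟩ := Finset.card_eq_two.mp (hfeq (f u))
                have hu : u ∈ Finset.univ.filter (fun x => f x = f u) := by simp
                have hu2 : u ∈ ({p, q} : Finset V) := hset ▸ hu
                have hpmem : p ∈ Finset.univ.filter (fun x => f x = f u) := by rw [hset]; simp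
                have hqmem : q ∈ Finset.univ.filter (fun x => f x = f u) := by rw [hset]; simp
                have hfp : f p = f u := (Finset.mem_filter.mp hpmem).2
                have hfq : f q = f u := (Finset.mem_filter.mp hqmem).2
                have hget : ∃ v, v ≠ u ∧ f v = f u := by
                  rcases Finset.mem_insert.mp hu2 with h | h
                  · exact ⟨q, fun hh => hpq ((hh.trans h).symm), hfq⟩
                  · have h' := Finset.mem_singleton.mp h
                    exact ⟨p, fun hh => hpq (hh.trans h'), hfp⟩
                obtain ⟨v, hvu, hv⟩ := hget
                refine ⟨v, hvu, fun w hwu hwv => ?_⟩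
                have hnc := hf (f u) u rfl v hv (fun h => hvu h.symm) w
                simp only [SimpleGraph.compl_adj] at hnc
                tauto
              -- all degrees are exactly 2
              have hdegeq : ∀ u : V, (G.neighborFinset u).card = 2 := by
                intro u
                obtain ⟨v, hvu, hall⟩ := hpart u
                have hsub : Finset.univ \ {u, v} ⊆ G.neighborFinset u ∪ G.neighborFinset v := by
                  intro w hw
                  simp only [Finset.mem_sdiff, Finset.mem_univ, Finset.mem_insert,
                    Finset.mem_singleton, not_or, true_and] at hw
                  simp only [Finset.mem_union, SimpleGraph.mem_neighborFinset]
                  rcases hall w hw.1 hw.2 with h | h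
                  · exact Or.inl h.symm
                  · exact Or.inr h.symm
                have hc2 : ({u, v} : Finset V).card = 2 := by
                  rw [Finset.card_insert_of_notMem
                      (by simp only [Finset.mem_singleton]; exact fun h => hvu h.symm),
                    Finset.card_singleton]
                have hcs : (Finset.univ \ ({u, v} : Finset V)).card = 4 := by
                  rw [Finset.card_sdiff_of_subset (Finset.subset_univ _), hc2, Finset.card_univ]
                  omega
                have hle4 := Finset.card_le_card hsub
                have hun := Finset.card_union_le (G.neighborFinset u) (G.neighborFinset v)
                have := hdeg2 u
                have := hdeg2 v
                omega
              -- neighborhoods of a b c are disjoint and cover everything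
              have hdisj : ∀ s t : V, (∀ w, ¬(G.Adj w s ∧ G.Adj w t)) →
                  Disjoint (G.neighborFinset s) (G.neighborFinset t) := by
                intro s t hst
                rw [Finset.disjoint_left]
                intro w hws hwt
                rw [SimpleGraph.mem_neighborFinset] at hws hwt
                exact hst w ⟨hws.symm, hwt.symm⟩
              have hdab := hdisj a b nab
              have hdac := hdisj a c nac
              have hdbc := hdisj b c nbc
              have huniv : G.neighborFinset a ∪ G.neighborFinset b ∪ G.neighborFinset c
                  = Finset.univ := by
                apply Finset.eq_univ_of_card
                rw [Finset.card_union_of_disjoint (Finset.disjoint_union_left.mpr ⟨hdac, hdbc⟩),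
                  Finset.card_union_of_disjoint hdab,
                  hdegeq a, hdegeq b, hdegeq c]
                omega
              have hamem : a ∈ G.neighborFinset a ∪ G.neighborFinset b ∪ G.neighborFinset c := by
                rw [huniv]; exact Finset.mem_univ a
              have hnaa : a ∉ G.neighborFinset a := by
                rw [SimpleGraph.mem_neighborFinset]
                exact fun h => G.irrefl h
              rcases Finset.mem_union.mp hamem with hamem' | hamem'
              · rcases Finset.mem_union.mp hamem' with h' | h'
                · exact hnaa h'
                · -- a ∈ N(b) : G.Adj b a
                  rw [SimpleGraph.mem_neighborFinset] at h'
                  have hcmem : c ∈ G.neighborFinset a ∪ G.neighborFinset b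
                      ∪ G.neighborFinset c := by rw [huniv]; exact Finset.mem_univ c
                  rcases Finset.mem_union.mp hcmem with hc' | hc'
                  · rcases Finset.mem_union.mp hc' with h'' | h''
                    · rw [SimpleGraph.mem_neighborFinset] at h''
                      exact nbc a ⟨h'.symm, h''⟩
                    · rw [SimpleGraph.mem_neighborFinset] at h''
                      exact nac b ⟨h', h''⟩
                  · rw [SimpleGraph.mem_neighborFinset] at hc'
                    exact G.irrefl hc'
              · -- a ∈ N(c) : G.Adj c a
                rw [SimpleGraph.mem_neighborFinset] at hamem'
                have hbmem : b ∈ G.neighborFinset a ∪ G.neighborFinset b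
                    ∪ G.neighborFinset c := by rw [huniv]; exact Finset.mem_univ b
                rcases Finset.mem_union.mp hbmem with hb' | hb'
                · rcases Finset.mem_union.mp hb' with h'' | h''
                  · rw [SimpleGraph.mem_neighborFinset] at h''
                    exact nbc a ⟨h'', hamem'.symm⟩
                  · rw [SimpleGraph.mem_neighborFinset] at h''
                    exact G.irrefl h''
                · rw [SimpleGraph.mem_neighborFinset] at hb'
                  exact nab c ⟨hamem', hb'⟩
            omega
      · -- max degree ≤ 1
        have hd1 : ∀ z x y : V, G.Adj z x → G.Adj z y → x = y := by
          intro z x y h1 h2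
          by_contra hne
          exact hd2 ⟨z, x, y, hne, h1, h2⟩
        by_cases h5 : 5 ≤ n
        · -- twoStep Gᶜ complete via pigeonhole
          have hcomp : ∀ u v : V, u ≠ v → ∃ w, Gᶜ.Adj w u ∧ Gᶜ.Adj w v := by
            intro u v huv
            by_contra hno
            push_neg at hno
            have key : ∀ s : V, s ≠ u → s ≠ v → G.Adj s u ∨ G.Adj s v := by
              intro s hsu hsv
              by_contra h'
              push_neg at h'
              exact hno s ⟨hsu, h'.1⟩ ⟨hsv, h'.2⟩
            set W : Finset V := Finset.univ \ {u, v} with hW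
            have hWcard : 3 ≤ W.card := by
              rw [hW, Finset.card_sdiff_of_subset (Finset.subset_univ _), Finset.card_univ]
              have : ({u, v} : Finset V).card ≤ 2 := by
                apply le_trans (Finset.card_insert_le _ _)
                simp
              omega
            have hsubset : W ⊆ W.filter (fun s => G.Adj s u) ∪ W.filter (fun s => G.Adj s v) := by
              intro s hs
              have hs' := hs
              rw [hW, Finset.mem_sdiff] at hs'
              simp only [Finset.mem_insert, Finset.mem_singleton, not_or] at hs'
              rcases key s hs'.2.1 hs'.2.2 with h | h
              · exact Finset.mem_union_left _ (Finset.mem_filter.mpr ⟨hs, h⟩)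
              · exact Finset.mem_union_right _ (Finset.mem_filter.mpr ⟨hs, h⟩)
            have hone : 2 ≤ (W.filter (fun s => G.Adj s u)).card ∨
                2 ≤ (W.filter (fun s => G.Adj s v)).card := by
              by_contra h'
              push_neg at h'
              have := Finset.card_le_card hsubset
              have := Finset.card_union_le (W.filter (fun s => G.Adj s u))
                (W.filter (fun s => G.Adj s v))
              omega
            rcases hone with h' | h'
            · obtain ⟨s1, hs1, s2, hs2, hss⟩ := Finset.one_lt_card.mp h'
              rw [Finset.mem_filter] at hs1 hs2
              exact hss (hd1 u s1 s2 hs1.2.symm hs2.2.symm)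
            · obtain ⟨s1, hs1, s2, hs2, hss⟩ := Finset.one_lt_card.mp h'
              rw [Finset.mem_filter] at hs1 hs2
              exact hss (hd1 v s1 s2 hs1.2.symm hs2.2.symm)
          have hpc : n ≤ Gᶜ.openPackingPartitionNum := by
            have hcb := clique_bound Gᶜ Finset.univ (fun u _ v _ huv => hcomp u v huv)
            rwa [Finset.card_univ] at hcb
          omega
        · push_neg at h5
          by_cases h4 : n = 4
          · -- either twoStep Gᶜ is complete or G ≅ 2P2
            have hcomp : ∀ u v : V, u ≠ v → ∃ w, Gᶜ.Adj w u ∧ Gᶜ.Adj w v := by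
              intro u v huv
              by_contra hno
              push_neg at hno
              have key : ∀ s : V, s ≠ u → s ≠ v → G.Adj s u ∨ G.Adj s v := by
                intro s hsu hsv
                by_contra h'
                push_neg at h'
                exact hno s ⟨hsu, h'.1⟩ ⟨hsv, h'.2⟩
              have hWcard : (Finset.univ \ ({u, v} : Finset V)).card = 2 := by
                rw [Finset.card_sdiff_of_subset (Finset.subset_univ _), Finset.card_univ]
                rw [Finset.card_insert_of_notMem (by simpa using huv), Finset.card_singleton]
                omega
              obtain ⟨w1, w2, hw12, hWeq⟩ := Finset.card_eq_two.mp hWcard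
              have hw1 : w1 ∈ Finset.univ \ ({u, v} : Finset V) := by rw [hWeq]; simp
              have hw2 : w2 ∈ Finset.univ \ ({u, v} : Finset V) := by rw [hWeq]; simp
              simp only [Finset.mem_sdiff, Finset.mem_univ, Finset.mem_insert,
                Finset.mem_singleton, not_or, true_and] at hw1 hw2
              have hk1 := key w1 hw1.1 hw1.2
              have hk2 := key w2 hw2.1 hw2.2
              -- no edge between u and v, u w2 etc, depending on cases
              rcases hk1 with k1 | k1 <;> rcases hk2 with k2 | k2
              · exact hw12 (hd1 u w1 w2 k1.symm k2.symm)
              · -- w1~u, w2~v : 2P2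
                refine h2P2 (iso2P2_of G u v w1 w2 huv (fun h => hw1.1 h.symm)
                  (fun h => hw2.1 h.symm) (fun h => hw1.2 h.symm) (fun h => hw2.2 h.symm)
                  hw12 (by omega) k1 k2 ?_ ?_ ?_ ?_)
                · exact fun h => hw1.2 (hd1 u w1 v k1.symm h)
                · exact fun h => hw12 (hd1 u w1 w2 k1.symm h)
                · exact fun h => hw12 (hd1 v w1 w2 h k2.symm)
                · exact fun h => hw2.1 (hd1 w1 u w2 k1 h).symm
              · -- w1~v, w2~u : 2P2 with roles swapped
                refine h2P2 (iso2P2_of G u v w2 w1 huv (fun h => hw2.1 h.symm)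
                  (fun h => hw1.1 h.symm) (fun h => hw2.2 h.symm) (fun h => hw1.2 h.symm)
                  hw12.symm (by omega) k2 k1 ?_ ?_ ?_ ?_)
                · exact fun h => hw2.2 (hd1 u w2 v k2.symm h)
                · exact fun h => hw12.symm (hd1 u w2 w1 k2.symm h)
                · exact fun h => hw12 (hd1 v w1 w2 k1.symm h)
                · exact fun h => hw1.1 (hd1 w2 u w1 k2 h).symm
              · exact hw12 (hd1 v w1 w2 k1.symm k2.symm)
            have hpc : n ≤ Gᶜ.openPackingPartitionNum := by
              have hcb := clique_bound Gᶜ Finset.univ (fun u _ v _ huv => hcomp u v huv)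
              rwa [Finset.card_univ] at hcb
            omega
          · -- n = 3
            have hn3' : n = 3 := by omega
            by_cases hcom : ∃ u v : V, u ≠ v ∧ ∃ w, Gᶜ.Adj w u ∧ Gᶜ.Adj w v
            · obtain ⟨u, v, huv, hw⟩ := hcom
              have hpc2 : 2 ≤ Gᶜ.openPackingPartitionNum := by
                have hcb := clique_bound Gᶜ {u, v} (fun s hs t ht hst => by
                  obtain ⟨w, hw1, hw2⟩ := hw
                  rcases Finset.mem_insert.mp hs with rfl | hs' <;>
                    rcases Finset.mem_insert.mp ht with rfl | ht'
                  · exact absurd rfl hst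
                  · have h' := Finset.mem_singleton.mp ht'
                    subst h'
                    exact ⟨w, hw1, hw2⟩
                  · have h' := Finset.mem_singleton.mp hs'
                    subst h'
                    exact ⟨w, hw2, hw1⟩
                  · have h1' := Finset.mem_singleton.mp hs'
                    have h2' := Finset.mem_singleton.mp ht'
                    subst h1'; subst h2'
                    exact absurd rfl hst)
                rwa [Finset.card_insert_of_notMem (by simpa using huv),
                  Finset.card_singleton] at hcb
              have hpg1 := opp_pos G a
              omega
            · push_neg at hcom
              have key : ∀ u v s : V, u ≠ v → s ≠ u → s ≠ v → G.Adj s u ∨ G.Adj s v := by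
                intro u v s huv hsu hsv
                by_contra h'
                push_neg at h'
                exact hcom u v huv s ⟨hsu, h'.1⟩ ⟨hsv, h'.2⟩
              have hcab := key a b c hab hac.symm hbc.symm
              have haX := key b c a hbc hab hac
              have hbX := key a c b hac hab.symm hbc
              rcases hcab with h1 | h1
              · rcases hbX with h2 | h2
                · exact absurd (hd1 a b c h2.symm h1.symm) hbc
                · exact absurd (hd1 c b a h2.symm h1) (fun hh => hab hh.symm)
              · rcases haX with h2 | h2
                · exact absurd (hd1 b a c h2.symm h1.symm) hac
                · exact absurd (hd1 c a b h2.symm h1) hab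
end Main

section Final
open Finset

def isoCompl {A : SimpleGraph V} {B : SimpleGraph W} (e : A ≃g B) : Aᶜ ≃g Bᶜ := by
  refine ⟨e.toEquiv, ?_⟩
  intro u v
  simp only [compl_adj, ne_eq, EmbeddingLike.apply_eq_iff_eq]
  constructor
  · rintro ⟨h1, h2⟩
    exact ⟨h1, fun h => h2 (e.map_rel_iff.mpr h)⟩
  · rintro ⟨h1, h2⟩
    exact ⟨h1, fun h => h2 (e.map_rel_iff.mp h)⟩

def myeq : (Fin 2 ⊕ Fin 2) ≃ Fin 4 where
  toFun := Sum.elim (fun i => if i = 0 then 0 else 2) (fun i => if i = 0 then 1 else 3)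
  invFun := fun i => if i = 0 then Sum.inl 0 else if i = 1 then Sum.inr 0
    else if i = 2 then Sum.inl 1 else Sum.inr 1
  left_inv := by decide
  right_inv := by decide

def myiso : ((⊤ : SimpleGraph (Fin 2)) ⊕g (⊤ : SimpleGraph (Fin 2)))ᶜ ≃g cycleGraph 4 := by
  refine ⟨myeq, ?_⟩
  intro a b
  rcases a with a | a <;> rcases b with b | b <;> fin_cases a <;> fin_cases b <;>
    simp [myeq, cycleGraph_adj, SimpleGraph.sum_adj, compl_adj] <;> decide

end Final

theorem stmt_10 [Fintype V] (G : SimpleGraph V)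
    (hC4 : ¬Nonempty (G ≃g cycleGraph 4))
    (h2P2 : ¬Nonempty (G ≃g ((⊤ : SimpleGraph (Fin 2)) ⊕g (⊤ : SimpleGraph (Fin 2))))) :
    Fintype.card V ≤ G.openPackingPartitionNum + Gᶜ.openPackingPartitionNum := by
  classical
  by_cases hS : ∃ x y z : V, x ≠ y ∧ x ≠ z ∧ y ≠ z ∧
      (∀ w, ¬(G.Adj w x ∧ G.Adj w y)) ∧ (∀ w, ¬(G.Adj w x ∧ G.Adj w z)) ∧
      (∀ w, ¬(G.Adj w y ∧ G.Adj w z))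
  · obtain ⟨x, y, z, h1, h2, h3, n1, n2, n3⟩ := hS
    exact main' G x y z h1 h2 h3 n1 n2 n3 h2P2
  · by_cases hT : ∃ x y z : V, x ≠ y ∧ x ≠ z ∧ y ≠ z ∧
        (∀ w, ¬(Gᶜ.Adj w x ∧ Gᶜ.Adj w y)) ∧ (∀ w, ¬(Gᶜ.Adj w x ∧ Gᶜ.Adj w z)) ∧
        (∀ w, ¬(Gᶜ.Adj w y ∧ Gᶜ.Adj w z))
    · obtain ⟨x, y, z, h1, h2, h3, n1, n2, n3⟩ := hT
      have h2P2' : ¬Nonempty (Gᶜ ≃g ((⊤ : SimpleGraph (Fin 2)) ⊕g (⊤ : SimpleGraph (Fin 2)))) := by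
        rintro ⟨e⟩
        have e2 := isoCompl e
        rw [compl_compl] at e2
        exact hC4 ⟨e2.trans myiso⟩
      have key := main' Gᶜ x y z h1 h2 h3 n1 n2 n3 h2P2'
      rw [compl_compl] at key
      omega
    · have hS' : ¬ ∃ x y z : V, x ≠ y ∧ x ≠ z ∧ y ≠ z ∧ G.IsOpenPacking {x, y, z} := by
        rintro ⟨x, y, z, h1, h2, h3, hp⟩
        exact hS ⟨x, y, z, h1, h2, h3,
          fun w => hp x (by simp) y (by simp) h1 w,
          fun w => hp x (by simp) z (by simp) h2 w,
          fun w => hp y (by simp) z (by simp) h3 w⟩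
      have hT' : ¬ ∃ x y z : V, x ≠ y ∧ x ≠ z ∧ y ≠ z ∧ Gᶜ.IsOpenPacking {x, y, z} := by
        rintro ⟨x, y, z, h1, h2, h3, hp⟩
        exact hT ⟨x, y, z, h1, h2, h3,
          fun w => hp x (by simp) y (by simp) h1 w,
          fun w => hp x (by simp) z (by simp) h2 w,
          fun w => hp y (by simp) z (by simp) h3 w⟩
      have f1 := fiber_bound G hS'
      have f2 := fiber_bound Gᶜ hT'
      omega
end

section
/- For any tree T on at least two vertices, p_o(T) = Δ(T). -/
open SimpleGraph

variable {V W : Type*}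

section Aux
variable {V : Type*} {G : SimpleGraph V}

/-- greedy coloring -/
noncomputable def greedyCol (rank : V → ℕ) (nbr : V → Finset V) {Δ : ℕ} (hΔ : 0 < Δ)
    (v : V) : Fin Δ :=
  if h : ∃ c : Fin Δ, c ∉ ((nbr v).filter (fun u => rank u < rank v)).attach.image
      (fun u => greedyCol rank nbr hΔ u.1)
  then h.choose else ⟨0, hΔ⟩
termination_by rank v
decreasing_by all_goals exact (Finset.mem_filter.mp u.2).2

lemma greedyCol_spec (rank : V → ℕ) (nbr : V → Finset V) {Δ : ℕ} (hΔ : 0 < Δ) (v : V)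
    (hcard : ((nbr v).filter (fun u => rank u < rank v)).card < Δ) :
    ∀ u ∈ nbr v, rank u < rank v → greedyCol rank nbr hΔ u ≠ greedyCol rank nbr hΔ v := by
  classical
  set F := ((nbr v).filter (fun u => rank u < rank v)).attach.image
      (fun u => greedyCol rank nbr hΔ u.1) with hF
  have hex : ∃ c : Fin Δ, c ∉ F := by
    by_contra hc
    push_neg at hc
    have : (Finset.univ : Finset (Fin Δ)) ⊆ F := fun c _ => hc c
    have h1 : Δ ≤ F.card := by
      simpa using Finset.card_le_card this
    have h2 : F.card ≤ ((nbr v).filter (fun u => rank u < rank v)).card := by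
      refine le_trans (Finset.card_image_le) ?_
      simp
    omega
  intro u hu hr heq
  have hv : greedyCol rank nbr hΔ v = hex.choose := by
    rw [greedyCol, dif_pos hex]
  have hmem : greedyCol rank nbr hΔ u ∈ F := by
    rw [hF]
    refine Finset.mem_image.mpr ⟨⟨u, ?_⟩, Finset.mem_attach _ _, rfl⟩
    exact Finset.mem_filter.mpr ⟨hu, hr⟩
  rw [heq, hv] at hmem
  exact hex.choose_spec hmem
end Aux

section TreeAux
variable {V : Type*} {G : SimpleGraph V}

lemma dist_le_succ_of_adj (hc : G.Connected) {r u v : V} (h : G.Adj u v) :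
    G.dist r v ≤ G.dist r u + 1 := by
  have h1 : G.dist u v ≤ 1 := by
    simpa using SimpleGraph.dist_le (Walk.cons h Walk.nil)
  have := hc.dist_triangle (u := r) (v := u) (w := v)
  omega

/-- In a tree, if `v` is not on a geodesic to `u` and `v ~ u`, we can extend. Key:
adjacent vertices have different distances from any root. -/
lemma tree_adj_dist_ne (ht : G.IsTree) (r : V) {u v : V} (h : G.Adj u v) :
    G.dist r u ≠ G.dist r v := by
  classical
  intro heq
  have hc := ht.isConnected
  obtain ⟨p, hp, hlen⟩ := hc.exists_path_of_dist r u
  by_cases hv : v ∈ p.support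
  · -- then dist r v ≤ len(takeUntil) = d - len(dropUntil) ≤ d - 1
    have h1 : G.dist r v ≤ (p.takeUntil v hv).length := SimpleGraph.dist_le _
    have h2 : 1 ≤ (p.dropUntil v hv).length := by
      have := SimpleGraph.dist_le (p.dropUntil v hv)
      have hpos : 0 < G.dist v u := (hc v u).pos_dist_of_ne h.ne'
      omega
    have h3 : (p.takeUntil v hv).length + (p.dropUntil v hv).length = p.length := by
      have h4 := congrArg Walk.length (p.take_spec hv)
      rwa [Walk.length_append] at h4
    omega
  · -- extend p by edge u-v to get a path r → v of length d+1; but unique path has length d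
    have hps : v ∉ p.reverse.support := by simpa using hv
    have q1 : G.Walk v r := Walk.cons h.symm p.reverse
    have hq1 : (Walk.cons h.symm p.reverse).IsPath := by
      rw [Walk.cons_isPath_iff]
      exact ⟨hp.reverse, hps⟩
    obtain ⟨p', hp', hlen'⟩ := hc.exists_path_of_dist v r
    rw [SimpleGraph.dist_comm] at hlen'
    have huniq := isAcyclic_iff_path_unique.mp ht.IsAcyclic
      (⟨Walk.cons h.symm p.reverse, hq1⟩ : G.Path v r) ⟨p', hp'⟩
    have hle : (Walk.cons h.symm p.reverse).length = p'.length := by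
      rw [Subtype.ext_iff] at huniq
      simp only at huniq
      rw [huniq]
    rw [Walk.length_cons, Walk.length_reverse, hlen, hlen'] at hle
    omega

lemma tree_parent_unique (ht : G.IsTree) (r : V) {v u₁ u₂ : V}
    (h1 : G.Adj u₁ v) (h2 : G.Adj u₂ v)
    (hd1 : G.dist r u₁ < G.dist r v) (hd2 : G.dist r u₂ < G.dist r v) : u₁ = u₂ := by
  classical
  have hc := ht.isConnected
  have key : ∀ u : V, G.Adj u v → G.dist r u < G.dist r v →
      ∃ q : G.Path v r, (q : G.Walk v r).getVert 1 = u := by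
    intro u hu hd
    obtain ⟨p, hp, hlen⟩ := hc.exists_path_of_dist r u
    have hv : v ∉ p.support := by
      intro hv
      have h1' : G.dist r v ≤ (p.takeUntil v hv).length := SimpleGraph.dist_le _
      have := Walk.length_takeUntil_le p hv
      omega
    have hps : v ∉ p.reverse.support := by simpa using hv
    have hq1 : (Walk.cons hu.symm p.reverse).IsPath := by
      rw [Walk.cons_isPath_iff]
      exact ⟨hp.reverse, hps⟩
    exact ⟨⟨Walk.cons hu.symm p.reverse, hq1⟩, by simp [Walk.getVert_cons_succ]⟩
  obtain ⟨q1, hq1⟩ := key u₁ h1 hd1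
  obtain ⟨q2, hq2⟩ := key u₂ h2 hd2
  have := isAcyclic_iff_path_unique.mp ht.IsAcyclic q1 q2
  rw [this] at hq1
  rw [← hq1, hq2]

lemma tree_parent_exists (hc : G.Connected) (r : V) {v : V} (hv : v ≠ r) :
    ∃ u, G.Adj u v ∧ G.dist r u + 1 = G.dist r v := by
  have hd : 0 < G.dist r v := (hc r v).pos_dist_of_ne (Ne.symm hv)
  obtain ⟨p, hp, hlen⟩ := hc.exists_path_of_dist v r
  rw [SimpleGraph.dist_comm] at hlen
  cases p with
  | nil => exact absurd rfl hv
  | cons h q =>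
    rename_i w
    refine ⟨w, h.symm, ?_⟩
    have h1 : G.dist r w ≤ q.length := by
      have := SimpleGraph.dist_le q
      rwa [SimpleGraph.dist_comm] at this
    have h2 : G.dist r v ≤ G.dist r w + 1 := dist_le_succ_of_adj hc h.symm
    rw [Walk.length_cons] at hlen
    omega
end TreeAux

theorem stmt_12 [Fintype V] (G : SimpleGraph V) [DecidableRel G.Adj]
    (ht : G.IsTree) (h2 : 2 ≤ Fintype.card V) :
    G.openPackingPartitionNum = G.maxDegree := by
  classical
  have hc := ht.isConnected
  have hne : Nonempty V := Fintype.card_pos_iff.mp (by omega)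
  unfold SimpleGraph.openPackingPartitionNum
  set S : Set ℕ := {k | ∃ f : V → Fin k, ∀ i, G.IsOpenPacking (f ⁻¹' {i})} with hS
  set n := Fintype.card V with hn
  obtain ⟨e⟩ : Nonempty (V ≃ Fin n) := ⟨Fintype.equivFin V⟩
  -- S is nonempty
  have hSne : n ∈ S := by
    refine ⟨fun v => e v, ?_⟩
    intro i u hu v hv huv w hw
    simp only [Set.mem_preimage, Set.mem_singleton_iff] at hu hv
    exact huv (e.injective (hu.trans hv.symm))
  -- max degree is positive
  obtain ⟨a, b, hab⟩ := Fintype.exists_pair_of_one_lt_card (α := V) (by omega)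
  have hΔ : 0 < G.maxDegree := by
    obtain ⟨p, hp, hlen⟩ := hc.exists_path_of_dist a b
    have hdeg : 0 < G.degree a := by
      rw [SimpleGraph.degree_pos_iff_exists_adj]
      cases p with
      | nil => exact absurd rfl hab
      | cons h q => exact ⟨_, h⟩
    exact lt_of_lt_of_le hdeg (G.degree_le_maxDegree a)
  -- lower bound
  have hlow : ∀ k ∈ S, G.maxDegree ≤ k := by
    rintro k ⟨f, hf⟩
    obtain ⟨v, hv⟩ := G.exists_maximal_degree_vertex
    rw [hv, ← SimpleGraph.card_neighborFinset_eq_degree]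
    have hinj : Set.InjOn f (G.neighborFinset v : Set V) := by
      intro x hx y hy hxy
      by_contra hne'
      refine hf (f x) x (by simp) y (by simp [hxy]) hne' v ⟨?_, ?_⟩
      · simpa [SimpleGraph.mem_neighborFinset] using hx
      · simpa [SimpleGraph.mem_neighborFinset] using hy
    calc (G.neighborFinset v).card
        ≤ (Finset.univ : Finset (Fin k)).card :=
          Finset.card_le_card_of_injOn f (fun _ _ => Finset.mem_univ _) hinj
      _ = k := by simp
  -- upper bound: construct a greedy coloring
  set r : V := Classical.arbitrary V with hr
  have hparex : ∀ v : V, ∃ u, v ≠ r → (G.Adj u v ∧ G.dist r u + 1 = G.dist r v) := by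
    intro v
    by_cases h : v = r
    · exact ⟨v, fun h' => absurd h h'⟩
    · obtain ⟨u, hu⟩ := tree_parent_exists hc r h
      exact ⟨u, fun _ => hu⟩
  choose par hparspec using hparex
  set rank : V → ℕ := fun v => n * G.dist r v + (e v).val with hrank
  set f : V → Fin G.maxDegree := greedyCol rank (fun v => G.neighborFinset (par v)) hΔ
    with hfdef
  have hrank_lt : ∀ u v : V, G.dist r u < G.dist r v → rank u < rank v := by
    intro u v h
    have h1 : (e u).val < n := (e u).isLt
    have h3 : n * G.dist r u + n ≤ n * G.dist r v := by
      calc n * G.dist r u + n = n * (G.dist r u + 1) := by ring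
        _ ≤ n * G.dist r v := Nat.mul_le_mul_left n h
    simp only [hrank]
    omega
  have hrank_inj : ∀ u v : V, rank u = rank v → u = v := by
    intro u v h
    have h1 : (e u).val < n := (e u).isLt
    have h2 : (e v).val < n := (e v).isLt
    have hd : G.dist r u = G.dist r v := by
      by_contra hd
      rcases Nat.lt_or_ge (G.dist r u) (G.dist r v) with hlt | hge
      · exact absurd h (Nat.ne_of_lt (hrank_lt u v hlt))
      · have hlt' : G.dist r v < G.dist r u := lt_of_le_of_ne hge (fun h' => hd h'.symm)
        exact absurd h.symm (Nat.ne_of_lt (hrank_lt v u hlt'))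
    simp only [hrank, hd] at h
    have : (e u).val = (e v).val := by omega
    exact e.injective (Fin.ext this)
  have key : ∀ u v : V, rank u < rank v → f u = f v → ∀ w, G.Adj w u → G.Adj w v → False := by
    intro u v hrk hfuv w hwu hwv
    have huv : u ≠ v := fun h => by subst h; exact absurd hrk (lt_irrefl _)
    have hvr : v ≠ r := by
      intro h
      subst h
      have hur : u ≠ r := huv
      have hd0 : 0 < G.dist r u := (hc r u).pos_dist_of_ne (Ne.symm hur)
      have h1 : (e r).val < n := (e r).isLt
      have h2 : n * 1 ≤ n * G.dist r u := Nat.mul_le_mul_left n hd0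
      simp only [hrank, SimpleGraph.dist_self] at hrk
      omega
    obtain ⟨hadj_p, hdist_p⟩ := hparspec v hvr
    by_cases hw : w = par v
    · subst hw
      have hcard : ((G.neighborFinset (par v)).filter (fun x => rank x < rank v)).card
          < G.maxDegree := by
        have hsub : (G.neighborFinset (par v)).filter (fun x => rank x < rank v)
            ⊆ (G.neighborFinset (par v)).erase v := by
          intro x hx
          obtain ⟨hx1, hx2⟩ := Finset.mem_filter.mp hx
          exact Finset.mem_erase.mpr
            ⟨fun h => by subst h; exact absurd hx2 (lt_irrefl _), hx1⟩
        have hvmem : v ∈ G.neighborFinset (par v) :=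
          (SimpleGraph.mem_neighborFinset _ _ _).mpr hadj_p
        have h1 := Finset.card_le_card hsub
        rw [Finset.card_erase_of_mem hvmem] at h1
        have h2 : (G.neighborFinset (par v)).card = G.degree (par v) :=
          G.card_neighborFinset_eq_degree (par v)
        have h3 := G.degree_le_maxDegree (par v)
        have h4 : 0 < G.degree (par v) :=
          (SimpleGraph.degree_pos_iff_exists_adj G (par v)).mpr ⟨v, hadj_p⟩
        omega
      exact greedyCol_spec rank (fun v => G.neighborFinset (par v)) hΔ v hcard u
        ((SimpleGraph.mem_neighborFinset _ _ _).mpr hwu) hrk hfuv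
    · have hdw : G.dist r v < G.dist r w := by
        rcases Nat.lt_or_ge (G.dist r w) (G.dist r v) with hlt | hge
        · exact absurd (tree_parent_unique ht r hwv hadj_p hlt (by omega)) hw
        · exact lt_of_le_of_ne hge (tree_adj_dist_ne ht r hwv.symm)
      rcases Nat.lt_or_ge (G.dist r u) (G.dist r w) with hlt | hge
      · exact huv (tree_parent_unique ht r hwu.symm hwv.symm hlt hdw)
      · have h5 : G.dist r v < G.dist r u := lt_of_lt_of_le hdw hge
        have := hrank_lt v u h5
        omega
  have hupper : G.maxDegree ∈ S := by
    refine ⟨f, ?_⟩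
    intro i u hu v hv huv w hw
    simp only [Set.mem_preimage, Set.mem_singleton_iff] at hu hv
    have hfe : f u = f v := hu.trans hv.symm
    have hne' : rank u ≠ rank v := fun h => huv (hrank_inj u v h)
    rcases Nat.lt_or_ge (rank u) (rank v) with h | h
    · exact key u v h hfe w hw.1 hw.2
    · exact key v u (lt_of_le_of_ne h (Ne.symm hne')) hfe.symm w hw.2 hw.1
  exact le_antisymm (Nat.sInf_le hupper) (hlow _ (Nat.sInf_mem ⟨_, hSne⟩))
end

section
/- If the complement Ḡ of a graph G of order n is bipartite, then χ(N(G)) = ω(N(G)), where N(G) is the two-step graph of G. -/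
open SimpleGraph

variable {V W : Type*}

private lemma key_chrom [Fintype V] (H : SimpleGraph V) (f : V → V)
    (h1 : ∀ u v, f u = f v → u ≠ v → ¬H.Adj u v)
    (h2 : ∀ u v, f u ≠ f v → H.Adj (f u) (f v)) :
    H.chromaticNumber = (H.cliqueNum : ℕ∞) := by
  classical
  set Q : Finset V := Finset.univ.image f with hQ
  have hQclique : H.IsClique ↑Q := by
    intro x hx y hy hxy
    simp only [hQ, Finset.coe_image, Set.mem_image, Finset.coe_univ, Set.image_univ,
      Set.mem_range] at hx hy
    obtain ⟨u, rfl⟩ := hx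
    obtain ⟨v, rfl⟩ := hy
    exact h2 u v hxy
  have hchrom : H.chromaticNumber ≤ (Q.card : ℕ∞) := by
    have C : H.Coloring ↥(Q : Finset V) := by
      refine Coloring.mk (fun v => ⟨f v, ?_⟩) ?_
      · exact Finset.mem_image_of_mem f (Finset.mem_univ v)
      · intro v w hadj hc
        have hfv : f v = f w := congrArg Subtype.val hc
        exact h1 v w hfv hadj.ne hadj
    have := C.colorable.chromaticNumber_le
    rwa [Fintype.card_coe] at this
  have hclique : (Q.card : ℕ∞) ≤ (H.cliqueNum : ℕ∞) := by
    exact_mod_cast IsClique.card_le_cliqueNum (tc := hQclique)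
  have homega : (H.cliqueNum : ℕ∞) ≤ H.chromaticNumber := by
    obtain ⟨s, hs⟩ := H.exists_isNClique_cliqueNum
    have := hs.isClique.card_le_chromaticNumber
    rwa [hs.card_eq] at this
  exact le_antisymm (le_trans hchrom hclique) homega

private lemma nonadj_of (G : SimpleGraph V) (p : V → Prop) {a b : V}
    (hpa : p a) (hpb : ¬p b)
    (h1 : ∀ w, ¬p w → G.Adj a w → w = b) (h2 : ∀ w, p w → G.Adj b w → w = a) :
    ¬G.twoStep.Adj a b := by
  rintro ⟨ne, w, hwa, hwb⟩
  by_cases hw : p w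
  · have := h2 w hw hwb.symm
    subst this
    exact G.loopless.irrefl _ hwa
  · have := h1 w hw hwa.symm
    subst this
    exact G.loopless.irrefl _ hwb

private lemma case1 (G : SimpleGraph V) (p : V → Prop)
    (hc : ∀ u v, u ≠ v → (p u ↔ p v) → G.Adj u v)
    (hA : ∀ u v, p u → p v → u ≠ v → G.twoStep.Adj u v)
    (hB : ∀ u v, ¬p u → ¬p v → u ≠ v → G.twoStep.Adj u v)
    (j : V → V)
    (hj1 : ∀ v, ¬p v → (∀ w, p w → ¬G.Adj v w) →
      (p (j v) ∧ ∀ w, ¬p w → ¬G.Adj (j v) w))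
    (hj2 : ∀ u v, ¬p u → (∀ w, p w → ¬G.Adj u w) → ¬p v → (∀ w, p w → ¬G.Adj v w) →
      j u = j v → u = v) :
    ∃ f : V → V, (∀ u v, f u = f v → u ≠ v → ¬G.twoStep.Adj u v) ∧
      (∀ u v, f u ≠ f v → G.twoStep.Adj (f u) (f v)) := by
  classical
  set Mp : V → V → Prop := fun v a => p a ∧ G.Adj v a ∧ (∀ w, p w → G.Adj v w → w = a) ∧
    (∀ w, ¬p w → G.Adj a w → w = v) with hMp
  set f : V → V := fun v =>
    if p v then v
    else if hm : ∃ a, Mp v a then hm.choose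
    else if (∀ w, p w → ¬G.Adj v w) then j v
    else v with hf
  have hfA : ∀ v, p v → f v = v := fun v hv => by simp only [hf]; rw [if_pos hv]
  have hfB : ∀ v, ¬p v →
      (∃ a, Mp v a ∧ f v = a) ∨
      ((∀ a, ¬Mp v a) ∧ (∀ w, p w → ¬G.Adj v w) ∧ f v = j v) ∨
      ((∀ a, ¬Mp v a) ∧ (∃ w, p w ∧ G.Adj v w) ∧ f v = v) := by
    intro v hv
    by_cases hm : ∃ a, Mp v a
    · refine Or.inl ⟨hm.choose, hm.choose_spec, ?_⟩
      simp only [hf]; rw [if_neg hv, dif_pos hm]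
    · have hm' := not_exists.mp hm
      by_cases h0 : ∀ w, p w → ¬G.Adj v w
      · refine Or.inr (Or.inl ⟨hm', h0, ?_⟩)
        simp only [hf]; rw [if_neg hv, dif_neg hm, if_pos h0]
      · have h0' := h0
        push_neg at h0'
        refine Or.inr (Or.inr ⟨hm', h0', ?_⟩)
        simp only [hf]; rw [if_neg hv, dif_neg hm, if_neg h0]
  have hnadj : ∀ v, ¬p v → f v ≠ v → (p (f v) ∧ ¬G.twoStep.Adj (f v) v) := by
    intro v hv hne
    rcases hfB v hv with ⟨a, hMa, hfa⟩ | ⟨_, h0, hfv⟩ | ⟨_, _, hfv⟩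
    · rw [hfa]
      exact ⟨hMa.1, nonadj_of G p hMa.1 hv hMa.2.2.2 hMa.2.2.1⟩
    · rw [hfv]
      obtain ⟨hpj, hj0⟩ := hj1 v hv h0
      refine ⟨hpj, nonadj_of G p hpj hv
        (fun w hw hadj => absurd hadj (hj0 w hw))
        (fun w hw hadj => absurd hadj (h0 w hw))⟩
    · exact absurd hfv hne
  refine ⟨f, ?_, ?_⟩
  · intro u v hfe hne
    by_cases hu : p u <;> by_cases hv : p v
    · rw [hfA u hu, hfA v hv] at hfe; exact absurd hfe hne
    · rw [hfA u hu] at hfe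
      by_cases hmv : f v = v
      · rw [hmv] at hfe; exact absurd hfe hne
      · obtain ⟨hp', hna⟩ := hnadj v hv hmv
        rw [hfe]
        exact hna
    · rw [hfA v hv] at hfe
      by_cases hmu : f u = u
      · rw [hmu] at hfe; exact absurd hfe hne
      · obtain ⟨hp', hna⟩ := hnadj u hu hmu
        rw [← hfe]
        exact fun h => hna h.symm
    · exfalso
      rcases hfB u hu with ⟨a, hMa, hfa⟩ | ⟨hm, h0, hfu⟩ | ⟨_, _, hfu⟩ <;>
        rcases hfB v hv with ⟨a', hMa', hfa'⟩ | ⟨hm', h0', hfv⟩ | ⟨_, _, hfv⟩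
      · rw [hfa, hfa'] at hfe; subst hfe
        exact hne (hMa.2.2.2 v hv hMa'.2.1.symm).symm
      · rw [hfa, hfv] at hfe
        obtain ⟨_, hj0⟩ := hj1 v hv h0'
        rw [← hfe] at hj0
        exact hj0 u hu hMa.2.1.symm
      · rw [hfa, hfv] at hfe; subst hfe; exact hv hMa.1
      · rw [hfu, hfa'] at hfe
        obtain ⟨_, hj0⟩ := hj1 u hu h0
        rw [hfe] at hj0
        exact hj0 v hv hMa'.2.1.symm
      · rw [hfu, hfv] at hfe
        exact hne (hj2 u v hu h0 hv h0' hfe)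
      · rw [hfu, hfv] at hfe
        obtain ⟨hpj, _⟩ := hj1 u hu h0
        rw [hfe] at hpj; exact hv hpj
      · rw [hfu, hfa'] at hfe; subst hfe; exact hu hMa'.1
      · rw [hfu, hfv] at hfe
        obtain ⟨hpj, _⟩ := hj1 v hv h0'
        rw [← hfe] at hpj; exact hu hpj
      · rw [hfu, hfv] at hfe; exact hne hfe
  · have hrange : ∀ z, ¬p (f z) →
        ((∀ a, ¬Mp (f z) a) ∧ (∃ w, p w ∧ G.Adj (f z) w)) := by
      intro z hz
      by_cases hpz : p z
      · rw [hfA z hpz] at hz; exact absurd hpz hz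
      · rcases hfB z hpz with ⟨a, hMa, hfa⟩ | ⟨_, h0, hfv⟩ | ⟨hm, hw, hfv⟩
        · rw [hfa] at hz; exact absurd hMa.1 hz
        · rw [hfv] at hz; exact absurd (hj1 z hpz h0).1 hz
        · rw [hfv]; exact ⟨hm, hw⟩
    have hcross : ∀ a b, p a → ¬p b → (∀ a', ¬Mp b a') → (∃ w, p w ∧ G.Adj b w) →
        G.twoStep.Adj a b := by
      intro a b hpa hpb hnm hex0
      obtain ⟨w0, hw0p, hw0⟩ := hex0
      have hab : a ≠ b := fun h => hpb (h ▸ hpa)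
      by_cases hex : ∃ w, p w ∧ G.Adj b w ∧ w ≠ a
      · obtain ⟨w, hwp, hwb, hwa⟩ := hex
        exact ⟨hab, w, hc w a hwa (iff_of_true hwp hpa), hwb.symm⟩
      · push_neg at hex
        have hba : G.Adj b a := by
          have := hex w0 hw0p hw0
          rwa [this] at hw0
        have hnma := hnm a
        simp only [hMp] at hnma
        push_neg at hnma
        obtain ⟨w, hw1, hw2, hw3⟩ := hnma hpa hba (fun w hw hadj => hex w hw hadj)
        exact ⟨hab, w, hw2.symm, hc w b hw3 (iff_of_false hw1 hpb)⟩
    intro u v hfe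
    by_cases hu : p (f u) <;> by_cases hv : p (f v)
    · exact hA _ _ hu hv hfe
    · obtain ⟨h2, h3⟩ := hrange v hv
      exact hcross _ _ hu hv h2 h3
    · obtain ⟨h2, h3⟩ := hrange u hu
      exact (hcross _ _ hv hu h2 h3).symm
    · exact hB _ _ hu hv hfe

private lemma adj_all (G : SimpleGraph V) (p : V → Prop)
    (hc : ∀ u v, u ≠ v → (p u ↔ p v) → G.Adj u v)
    (a a' : V) (hpa : p a) (hpa' : p a') (hne : a ≠ a')
    (hA2 : ∀ x, p x → x = a ∨ x = a') :
    ∀ b, ¬p b → ¬((∀ w, ¬p w → G.Adj a w → w = b) ∧ (∀ w, p w → G.Adj b w → w = a)) →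
      G.twoStep.Adj a b := by
  intro b hb hQ
  have hab : a ≠ b := fun h => hb (h ▸ hpa)
  by_cases h1 : ∀ w, ¬p w → G.Adj a w → w = b
  · have h2 : ¬∀ w, p w → G.Adj b w → w = a := fun h2 => hQ ⟨h1, h2⟩
    push_neg at h2
    obtain ⟨w, hw, hadj, hwa⟩ := h2
    have hwa' : w = a' := (hA2 w hw).resolve_left hwa
    subst hwa'
    exact ⟨hab, w, hc w a hwa (iff_of_true hw hpa), hadj.symm⟩
  · push_neg at h1
    obtain ⟨w, hw, hadj, hwb⟩ := h1
    exact ⟨hab, w, hadj.symm, hc w b hwb (iff_of_false hw hb)⟩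

private lemma case2aux (G : SimpleGraph V) (p : V → Prop)
    (a a' : V) (hpa : p a) (hpa' : p a') (hnea : a ≠ a')
    (hnadj : ¬G.twoStep.Adj a a')
    (hA2 : ∀ x, p x → x = a ∨ x = a')
    (hB : ∀ u v, ¬p u → ¬p v → u ≠ v → G.twoStep.Adj u v)
    (hQ' : ∀ b, ¬p b → G.twoStep.Adj a' b) :
    ∃ f : V → V, (∀ u v, f u = f v → u ≠ v → ¬G.twoStep.Adj u v) ∧
      (∀ u v, f u ≠ f v → G.twoStep.Adj (f u) (f v)) := by
  classical
  set t : V := if h : ∃ b, ¬p b ∧ ¬G.twoStep.Adj a b then h.choose else a' with htdef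
  have ht1 : ¬G.twoStep.Adj a t := by
    by_cases h : ∃ b, ¬p b ∧ ¬G.twoStep.Adj a b
    · rw [htdef, dif_pos h]; exact h.choose_spec.2
    · rw [htdef, dif_neg h]; exact hnadj
  have htside : p t → t = a' := by
    by_cases h : ∃ b, ¬p b ∧ ¬G.twoStep.Adj a b
    · rw [htdef, dif_pos h]; exact fun hp => absurd hp h.choose_spec.1
    · rw [htdef, dif_neg h]; exact fun _ => rfl
  refine ⟨fun v => if v = a then t else v, ?_, ?_⟩
  · intro u v hfe hne
    dsimp only at hfe
    by_cases hu : u = a <;> by_cases hv : v = a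
    · exact absurd (hu.trans hv.symm) hne
    · rw [if_pos hu, if_neg hv] at hfe
      subst hu
      rw [← hfe]
      exact ht1
    · rw [if_neg hu, if_pos hv] at hfe
      subst hv
      rw [hfe]
      exact fun h => ht1 h.symm
    · rw [if_neg hu, if_neg hv] at hfe
      exact absurd hfe hne
  · have hside : ∀ z, p (if z = a then t else z) → (if z = a then t else z) = a' := by
      intro z hz
      by_cases h : z = a
      · rw [if_pos h] at hz ⊢; exact htside hz
      · rw [if_neg h] at hz ⊢
        exact (hA2 z hz).resolve_left h
    intro u v hfe
    dsimp only at hfe ⊢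
    by_cases hu : p (if u = a then t else u) <;> by_cases hv : p (if v = a then t else v)
    · exact absurd ((hside u hu).trans (hside v hv).symm) hfe
    · rw [hside u hu]; exact hQ' _ hv
    · rw [hside v hv]; exact (hQ' _ hu).symm
    · exact hB _ _ hu hv hfe

private lemma case2 (G : SimpleGraph V) (p : V → Prop)
    (hc : ∀ u v, u ≠ v → (p u ↔ p v) → G.Adj u v)
    (a1 a2 : V) (hp1 : p a1) (hp2 : p a2) (hne : a1 ≠ a2)
    (hnadj : ¬G.twoStep.Adj a1 a2)
    (hB : ∀ u v, ¬p u → ¬p v → u ≠ v → G.twoStep.Adj u v) :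
    ∃ f : V → V, (∀ u v, f u = f v → u ≠ v → ¬G.twoStep.Adj u v) ∧
      (∀ u v, f u ≠ f v → G.twoStep.Adj (f u) (f v)) := by
  classical
  have hA2 : ∀ x, p x → x = a1 ∨ x = a2 := by
    intro x hx
    by_contra h
    push_neg at h
    exact hnadj ⟨hne, x, hc x a1 h.1 (iff_of_true hx hp1), hc x a2 h.2 (iff_of_true hx hp2)⟩
  have haveA : ∀ a b, p a → ¬p b →
      ((∀ w, ¬p w → G.Adj a w → w = b) ∧ (∀ w, p w → G.Adj b w → w = a)) →
      ¬G.twoStep.Adj a b := fun a b hpa hpb hq =>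
    nonadj_of G p hpa hpb hq.1 hq.2
  by_cases hI : ∃ b1 b2, b1 ≠ b2 ∧
      (¬p b1 ∧ (∀ w, ¬p w → G.Adj a1 w → w = b1) ∧ (∀ w, p w → G.Adj b1 w → w = a1)) ∧
      (¬p b2 ∧ (∀ w, ¬p w → G.Adj a2 w → w = b2) ∧ (∀ w, p w → G.Adj b2 w → w = a2))
  · obtain ⟨b1, b2, hbne, ⟨hpb1, hq1⟩, ⟨hpb2, hq2⟩⟩ := hI
    have hnadj1 : ¬G.twoStep.Adj a1 b1 := haveA a1 b1 hp1 hpb1 hq1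
    have hnadj2 : ¬G.twoStep.Adj a2 b2 := haveA a2 b2 hp2 hpb2 hq2
    refine ⟨fun v => if v = a1 then b1 else if v = a2 then b2 else v, ?_, ?_⟩
    · intro u v hfe hneuv
      dsimp only at hfe
      by_cases hu1 : u = a1
      · rw [if_pos hu1] at hfe
        by_cases hv1 : v = a1
        · exact absurd (hu1.trans hv1.symm) hneuv
        · rw [if_neg hv1] at hfe
          by_cases hv2 : v = a2
          · rw [if_pos hv2] at hfe; exact absurd hfe hbne
          · rw [if_neg hv2] at hfe
            rw [hu1, ← hfe]
            exact hnadj1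
      · rw [if_neg hu1] at hfe
        by_cases hu2 : u = a2
        · rw [if_pos hu2] at hfe
          by_cases hv1 : v = a1
          · rw [if_pos hv1] at hfe; exact absurd hfe.symm hbne
          · rw [if_neg hv1] at hfe
            by_cases hv2 : v = a2
            · exact absurd (hu2.trans hv2.symm) hneuv
            · rw [if_neg hv2] at hfe
              rw [hu2, ← hfe]
              exact hnadj2
        · rw [if_neg hu2] at hfe
          by_cases hv1 : v = a1
          · rw [if_pos hv1] at hfe
            rw [hfe, hv1]
            exact fun h => hnadj1 h.symm
          · rw [if_neg hv1] at hfe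
            by_cases hv2 : v = a2
            · rw [if_pos hv2] at hfe
              rw [hfe, hv2]
              exact fun h => hnadj2 h.symm
            · rw [if_neg hv2] at hfe
              exact absurd hfe hneuv
    · have hsides : ∀ z, ¬p (if z = a1 then b1 else if z = a2 then b2 else z) := by
        intro z
        by_cases h1 : z = a1
        · rw [if_pos h1]; exact hpb1
        · rw [if_neg h1]
          by_cases h2 : z = a2
          · rw [if_pos h2]; exact hpb2
          · rw [if_neg h2]
            intro hz
            rcases hA2 z hz with h | h
            exacts [h1 h, h2 h]
      intro u v hfe
      dsimp only at hfe ⊢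
      exact hB _ _ (hsides u) (hsides v) hfe
  · by_cases h2e : ∀ b, ¬p b →
        ¬((∀ w, ¬p w → G.Adj a2 w → w = b) ∧ (∀ w, p w → G.Adj b w → w = a2))
    · have hQ' : ∀ b, ¬p b → G.twoStep.Adj a2 b := fun b hb =>
        adj_all G p hc a2 a1 hp2 hp1 hne.symm (fun x hx => (hA2 x hx).symm) b hb (h2e b hb)
      exact case2aux G p a1 a2 hp1 hp2 hne hnadj hA2 hB hQ'
    · push_neg at h2e
      obtain ⟨b2, hpb2, hq2a, hq2b⟩ := h2e
      by_cases h1e : ∀ b, ¬p b →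
          ¬((∀ w, ¬p w → G.Adj a1 w → w = b) ∧ (∀ w, p w → G.Adj b w → w = a1))
      · have hQ' : ∀ b, ¬p b → G.twoStep.Adj a1 b := fun b hb =>
          adj_all G p hc a1 a2 hp1 hp2 hne hA2 b hb (h1e b hb)
        exact case2aux G p a2 a1 hp2 hp1 hne.symm (fun h => hnadj h.symm)
          (fun x hx => (hA2 x hx).symm) hB hQ'
      · push_neg at h1e
        obtain ⟨b1, hpb1, hq1a, hq1b⟩ := h1e
        have hbe : b1 = b2 := by
          by_contra hbe
          exact hI ⟨b1, b2, hbe, ⟨hpb1, hq1a, hq1b⟩, ⟨hpb2, hq2a, hq2b⟩⟩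
        subst hbe
        have hnadj1 : ¬G.twoStep.Adj a1 b1 := haveA a1 b1 hp1 hpb1 ⟨hq1a, hq1b⟩
        have hnadj2 : ¬G.twoStep.Adj a2 b1 := haveA a2 b1 hp2 hpb2 ⟨hq2a, hq2b⟩
        refine ⟨fun v => if v = a1 ∨ v = a2 then b1 else v, ?_, ?_⟩
        · intro u v hfe hneuv
          dsimp only at hfe
          by_cases hu : u = a1 ∨ u = a2 <;> by_cases hv : v = a1 ∨ v = a2
          · rcases hu with hu | hu <;> rcases hv with hv | hv
            · exact absurd (hu.trans hv.symm) hneuv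
            · rw [hu, hv]; exact hnadj
            · rw [hu, hv]; exact fun h => hnadj h.symm
            · exact absurd (hu.trans hv.symm) hneuv
          · rw [if_pos hu, if_neg hv] at hfe
            rw [← hfe]
            rcases hu with hu | hu <;> rw [hu]
            exacts [hnadj1, hnadj2]
          · rw [if_neg hu, if_pos hv] at hfe
            rw [hfe]
            rcases hv with hv | hv <;> rw [hv]
            exacts [fun h => hnadj1 h.symm, fun h => hnadj2 h.symm]
          · rw [if_neg hu, if_neg hv] at hfe
            exact absurd hfe hneuv
        · have hsides : ∀ z, ¬p (if z = a1 ∨ z = a2 then b1 else z) := by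
            intro z
            by_cases h : z = a1 ∨ z = a2
            · rw [if_pos h]; exact hpb1
            · rw [if_neg h]; exact fun hz => h (hA2 z hz)
          intro u v hfe
          dsimp only at hfe ⊢
          exact hB _ _ (hsides u) (hsides v) hfe

private lemma case4aux (G : SimpleGraph V) (p : V → Prop)
    (hc : ∀ u v, u ≠ v → (p u ↔ p v) → G.Adj u v)
    (a a' b b' : V) (hpa : p a) (hpa' : p a') (hpb : ¬p b) (hpb' : ¬p b')
    (hnea : a ≠ a') (hneb : b ≠ b')
    (hnadjA : ¬G.twoStep.Adj a a') (hnadjB : ¬G.twoStep.Adj b b')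
    (hA2 : ∀ x, p x → x = a ∨ x = a') (hB2 : ∀ x, ¬p x → x = b ∨ x = b')
    (hab : G.Adj a b) :
    ∃ f : V → V, (∀ u v, f u = f v → u ≠ v → ¬G.twoStep.Adj u v) ∧
      (∀ u v, f u ≠ f v → G.twoStep.Adj (f u) (f v)) := by
  classical
  have hXa : ∀ w, ¬p w → G.Adj a w → w = b := by
    intro w hw hadj
    rcases hB2 w hw with h | h
    · exact h
    · subst h
      exact absurd ⟨hneb, a, hab, hadj⟩ hnadjB
  have hXb : ∀ w, p w → G.Adj b w → w = a := by
    intro w hw hadj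
    rcases hA2 w hw with h | h
    · exact h
    · subst h
      exact absurd ⟨hnea, b, hab.symm, hadj⟩ hnadjA
  have hXa' : ∀ w, ¬p w → G.Adj a' w → w = b' := by
    intro w hw hadj
    rcases hB2 w hw with h | h
    · subst h
      exact absurd ⟨hnea, w, hab.symm, hadj.symm⟩ hnadjA
    · exact h
  have hXb' : ∀ w, p w → G.Adj b' w → w = a' := by
    intro w hw hadj
    rcases hA2 w hw with h | h
    · subst h
      exact absurd ⟨hneb, w, hab, hadj.symm⟩ hnadjB
    · exact h
  have hnab : ¬G.twoStep.Adj a b := nonadj_of G p hpa hpb hXa hXb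
  have hnab' : ¬G.twoStep.Adj a' b' := nonadj_of G p hpa' hpb' hXa' hXb'
  have hba' : b ≠ a' := by intro h; rw [h] at hpb; exact hpb hpa'
  have hb'a : b' ≠ a := by intro h; rw [h] at hpb'; exact hpb' hpa
  refine ⟨fun v => if v = a then b else if v = b' then a' else v, ?_, ?_⟩
  · intro u v hfe hne
    dsimp only at hfe
    by_cases hu1 : u = a
    · rw [if_pos hu1] at hfe
      by_cases hv1 : v = a
      · exact absurd (hu1.trans hv1.symm) hne
      · rw [if_neg hv1] at hfe
        by_cases hv2 : v = b'
        · rw [if_pos hv2] at hfe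
          exact absurd hfe hba'
        · rw [if_neg hv2] at hfe
          rw [hu1, ← hfe]
          exact hnab
    · rw [if_neg hu1] at hfe
      by_cases hu2 : u = b'
      · rw [if_pos hu2] at hfe
        by_cases hv1 : v = a
        · rw [if_pos hv1] at hfe
          exact absurd hfe.symm hba'
        · rw [if_neg hv1] at hfe
          by_cases hv2 : v = b'
          · exact absurd (hu2.trans hv2.symm) hne
          · rw [if_neg hv2] at hfe
            rw [hu2, ← hfe]
            exact fun h => hnab' h.symm
      · rw [if_neg hu2] at hfe
        by_cases hv1 : v = a
        · rw [if_pos hv1] at hfe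
          rw [hfe, hv1]
          exact fun h => hnab h.symm
        · rw [if_neg hv1] at hfe
          by_cases hv2 : v = b'
          · rw [if_pos hv2] at hfe
            rw [hfe, hv2]
            exact hnab'
          · rw [if_neg hv2] at hfe
            exact absurd hfe hne
  · have haa' : G.Adj a a' := hc a a' hnea (iff_of_true hpa hpa')
    have hadj : G.twoStep.Adj b a' := ⟨hba', a, hab, haa'⟩
    have himg : ∀ z, (if z = a then b else if z = b' then a' else z) = b ∨
        (if z = a then b else if z = b' then a' else z) = a' := by
      intro z
      by_cases h1 : z = a
      · rw [if_pos h1]; exact Or.inl rfl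
      · rw [if_neg h1]
        by_cases h2 : z = b'
        · rw [if_pos h2]; exact Or.inr rfl
        · rw [if_neg h2]
          by_cases hz : p z
          · exact Or.inr ((hA2 z hz).resolve_left h1)
          · exact Or.inl ((hB2 z hz).resolve_right h2)
    intro u v hfe
    dsimp only at hfe ⊢
    rcases himg u with hu | hu <;> rcases himg v with hv | hv
    · exact absurd (hu.trans hv.symm) hfe
    · rw [hu, hv]; exact hadj
    · rw [hu, hv]; exact hadj.symm
    · exact absurd (hu.trans hv.symm) hfe

private lemma case4 (G : SimpleGraph V) (p : V → Prop)
    (hc : ∀ u v, u ≠ v → (p u ↔ p v) → G.Adj u v)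
    (a1 a2 b1 b2 : V) (hp1 : p a1) (hp2 : p a2) (hq1 : ¬p b1) (hq2 : ¬p b2)
    (hnea : a1 ≠ a2) (hneb : b1 ≠ b2)
    (hnadjA : ¬G.twoStep.Adj a1 a2) (hnadjB : ¬G.twoStep.Adj b1 b2) :
    ∃ f : V → V, (∀ u v, f u = f v → u ≠ v → ¬G.twoStep.Adj u v) ∧
      (∀ u v, f u ≠ f v → G.twoStep.Adj (f u) (f v)) := by
  classical
  have hA2 : ∀ x, p x → x = a1 ∨ x = a2 := by
    intro x hx
    by_contra h
    push_neg at h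
    exact hnadjA ⟨hnea, x, hc x a1 h.1 (iff_of_true hx hp1), hc x a2 h.2 (iff_of_true hx hp2)⟩
  have hB2 : ∀ x, ¬p x → x = b1 ∨ x = b2 := by
    intro x hx
    by_contra h
    push_neg at h
    exact hnadjB ⟨hneb, x, hc x b1 h.1 (iff_of_false hx hq1), hc x b2 h.2 (iff_of_false hx hq2)⟩
  by_cases hx : ∃ u w, p u ∧ ¬p w ∧ G.Adj u w
  · obtain ⟨u, w, hu, hw, hadj⟩ := hx
    rcases hA2 u hu with h | h <;> rcases hB2 w hw with h' | h' <;> rw [h, h'] at hadj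
    · exact case4aux G p hc a1 a2 b1 b2 hp1 hp2 hq1 hq2 hnea hneb hnadjA hnadjB hA2 hB2 hadj
    · exact case4aux G p hc a1 a2 b2 b1 hp1 hp2 hq2 hq1 hnea hneb.symm hnadjA
        (fun h => hnadjB h.symm) hA2 (fun x hx => (hB2 x hx).symm) hadj
    · exact case4aux G p hc a2 a1 b1 b2 hp2 hp1 hq1 hq2 hnea.symm hneb
        (fun h => hnadjA h.symm) hnadjB (fun x hx => (hA2 x hx).symm) hB2 hadj
    · exact case4aux G p hc a2 a1 b2 b1 hp2 hp1 hq2 hq1 hnea.symm hneb.symm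
        (fun h => hnadjA h.symm) (fun h => hnadjB h.symm)
        (fun x hx => (hA2 x hx).symm) (fun x hx => (hB2 x hx).symm) hadj
  · push_neg at hx
    refine ⟨fun _ => a1, ?_, ?_⟩
    · rintro u v _ hne ⟨_, w, hwu, hwv⟩
      by_cases hu : p u <;> by_cases hv : p v
      · by_cases hw : p w
        · rcases hA2 u hu with h | h <;> rcases hA2 v hv with h' | h'
          · exact hne (h.trans h'.symm)
          · subst h; subst h'
            exact hnadjA ⟨hnea, w, hwu, hwv⟩
          · subst h; subst h'
            exact hnadjA ⟨hnea, w, hwv, hwu⟩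
          · exact hne (h.trans h'.symm)
        · exact hx u w hu hw hwu.symm
      · by_cases hw : p w
        · exact hx w v hw hv hwv
        · exact hx u w hu hw hwu.symm
      · by_cases hw : p w
        · exact hx w u hw hu hwu
        · exact hx v w hv hw hwv.symm
      · by_cases hw : p w
        · exact hx w u hw hu hwu
        · rcases hB2 u hu with h | h <;> rcases hB2 v hv with h' | h'
          · exact hne (h.trans h'.symm)
          · subst h; subst h'
            exact hnadjB ⟨hneb, w, hwu, hwv⟩
          · subst h; subst h'
            exact hnadjB ⟨hneb, w, hwv, hwu⟩
          · exact hne (h.trans h'.symm)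
    · intro u v hfe
      exact absurd rfl hfe


theorem stmt_14 [Fintype V] (G : SimpleGraph V) (hbip : Gᶜ.Colorable 2) :
    G.twoStep.chromaticNumber = (G.twoStep.cliqueNum : ℕ∞) := by
  classical
  obtain ⟨C⟩ := hbip
  let p : V → Prop := fun v => C v = 0
  have hcp : ∀ u v : V, u ≠ v → (p u ↔ p v) → G.Adj u v := by
    intro u v hne hiff
    by_contra hadj
    have hGc : Gᶜ.Adj u v := by
      rw [compl_adj]; exact ⟨hne, hadj⟩
    have hval := C.valid hGc
    have h2 : ∀ i : Fin 2, i = 0 ∨ i = 1 := by decide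
    rcases h2 (C u) with h | h <;> rcases h2 (C v) with h' | h'
    · exact hval (h.trans h'.symm)
    · exact absurd (hiff.mp h) (by show ¬(C v = 0); rw [h']; decide)
    · exact absurd (hiff.mpr h') (by show ¬(C u = 0); rw [h]; decide)
    · exact hval (h.trans h'.symm)
  have hcnot : ∀ u v : V, u ≠ v → ((¬p u) ↔ (¬p v)) → G.Adj u v := fun u v h hiff =>
    hcp u v h (not_iff_not.mp hiff)
  suffices hex : ∃ f : V → V, (∀ u v, f u = f v → u ≠ v → ¬G.twoStep.Adj u v) ∧
      (∀ u v, f u ≠ f v → G.twoStep.Adj (f u) (f v)) by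
    obtain ⟨f, h1, h2⟩ := hex
    exact key_chrom G.twoStep f h1 h2
  by_cases hA : ∀ u v : V, p u → p v → u ≠ v → G.twoStep.Adj u v
  · by_cases hB : ∀ u v : V, ¬p u → ¬p v → u ≠ v → G.twoStep.Adj u v
    · rcases Function.Embedding.total
        {v : V // ¬p v ∧ ∀ w, p w → ¬G.Adj v w}
        {v : V // p v ∧ ∀ w, ¬p w → ¬G.Adj v w} with htot | htot <;> obtain ⟨e⟩ := htot
      · set j : V → V := fun v =>
          if h : ¬p v ∧ ∀ w, p w → ¬G.Adj v w then (e ⟨v, h⟩ : V) else v with hjdef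
        apply case1 G p hcp hA hB j
        · intro v hv h0
          have hm : ¬p v ∧ ∀ w, p w → ¬G.Adj v w := ⟨hv, h0⟩
          rw [hjdef]; dsimp only; rw [dif_pos hm]
          exact (e ⟨v, hm⟩).2
        · intro u v hu h0u hv h0v hje
          have hmu : ¬p u ∧ ∀ w, p w → ¬G.Adj u w := ⟨hu, h0u⟩
          have hmv : ¬p v ∧ ∀ w, p w → ¬G.Adj v w := ⟨hv, h0v⟩
          rw [hjdef] at hje; dsimp only at hje; rw [dif_pos hmu, dif_pos hmv] at hje
          exact congrArg Subtype.val (e.injective (Subtype.ext hje))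
      · set j : V → V := fun v =>
          if h : p v ∧ ∀ w, ¬p w → ¬G.Adj v w then (e ⟨v, h⟩ : V) else v with hjdef
        apply case1 G (fun v => ¬p v) hcnot hB
          (fun u v hu hv hne => hA u v (not_not.mp hu) (not_not.mp hv) hne) j
        · intro v hv h0
          have hm : p v ∧ ∀ w, ¬p w → ¬G.Adj v w := ⟨not_not.mp hv, h0⟩
          rw [hjdef]; dsimp only; rw [dif_pos hm]
          exact ⟨(e ⟨v, hm⟩).2.1, fun w hw => (e ⟨v, hm⟩).2.2 w (not_not.mp hw)⟩
        · intro u v hu h0u hv h0v hje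
          have hmu : p u ∧ ∀ w, ¬p w → ¬G.Adj u w := ⟨not_not.mp hu, h0u⟩
          have hmv : p v ∧ ∀ w, ¬p w → ¬G.Adj v w := ⟨not_not.mp hv, h0v⟩
          rw [hjdef] at hje; dsimp only at hje; rw [dif_pos hmu, dif_pos hmv] at hje
          exact congrArg Subtype.val (e.injective (Subtype.ext hje))
    · push_neg at hB
      obtain ⟨b1, b2, hb1, hb2, hne, hnadj⟩ := hB
      exact case2 G (fun v => ¬p v) hcnot b1 b2 hb1 hb2 hne hnadj
        (fun u v hu hv h => hA u v (not_not.mp hu) (not_not.mp hv) h)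
  · push_neg at hA
    obtain ⟨a1, a2, h1, h2, hnea, hnadjA⟩ := hA
    by_cases hB : ∀ u v : V, ¬p u → ¬p v → u ≠ v → G.twoStep.Adj u v
    · exact case2 G p hcp a1 a2 h1 h2 hnea hnadjA hB
    · push_neg at hB
      obtain ⟨b1, b2, hb1, hb2, hneb, hnadjB⟩ := hB
      exact case4 G p hcp a1 a2 b1 b2 h1 h2 hb1 hb2 hnea hneb hnadjA hnadjB
end

section
/- For a graph G of order at least three, ρ_o(G) = 1 if and only if diam(G) ≤ 2 and every edge of G lies on a triangle. Moreover, this condition is equivalent to p_o(G) = |V(G)|. -/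
open SimpleGraph

variable {V W : Type*}

theorem stmt_16 [Fintype V] (G : SimpleGraph V) (hc : G.Connected)
    (h3 : 3 ≤ Fintype.card V) :
    (G.openPackingNum = 1 ↔
        (G.diam ≤ 2 ∧ ∀ u v, G.Adj u v → ∃ w, G.Adj u w ∧ G.Adj v w)) ∧
      (G.openPackingNum = 1 ↔ G.openPackingPartitionNum = Fintype.card V) := by
  classical
  have hne : Nonempty V := Fintype.card_pos_iff.mp (by omega)
  have hsub : ∀ B : Set V, B.Subsingleton → G.IsOpenPacking B :=
    fun B hB u hu v hv huv _ _ => huv (hB hu hv)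
  have bdd : BddAbove {n | ∃ B : Finset V, G.IsOpenPacking ↑B ∧ B.card = n} := by
    refine ⟨Fintype.card V, ?_⟩
    rintro n ⟨B, _, rfl⟩
    simpa using B.card_le_univ
  have h1mem : 1 ∈ {n | ∃ B : Finset V, G.IsOpenPacking ↑B ∧ B.card = n} := by
    obtain ⟨v⟩ := hne
    exact ⟨{v}, hsub _ (by simp), Finset.card_singleton v⟩
  -- Lemma A
  have hA : G.openPackingNum = 1 ↔ ∀ u v : V, u ≠ v → ∃ w, G.Adj w u ∧ G.Adj w v := by
    constructor
    · intro h u v huv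
      by_contra hno
      push_neg at hno
      have h2mem : 2 ∈ {n | ∃ B : Finset V, G.IsOpenPacking ↑B ∧ B.card = n} := by
        refine ⟨{u, v}, ?_, by rw [Finset.card_insert_of_notMem (by simpa), Finset.card_singleton]⟩
        intro a ha b hb hab w hw
        simp only [Finset.coe_insert, Finset.coe_singleton, Set.mem_insert_iff,
          Set.mem_singleton_iff] at ha hb
        rcases ha with rfl | rfl <;> rcases hb with rfl | rfl
        · exact hab rfl
        · exact hno w hw.1 hw.2
        · exact hno w hw.2 hw.1
        · exact hab rfl
      have := le_csSup bdd h2mem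
      rw [SimpleGraph.openPackingNum] at h
      omega
    · intro hp
      refine le_antisymm (csSup_le ⟨1, h1mem⟩ ?_) (le_csSup bdd h1mem)
      rintro n ⟨B, hB, rfl⟩
      by_contra hgt
      push_neg at hgt
      obtain ⟨a, ha, b, hb, hab⟩ := Finset.one_lt_card.mp hgt
      obtain ⟨w, hw1, hw2⟩ := hp a b hab
      exact hB a (Finset.mem_coe.mpr ha) b (Finset.mem_coe.mpr hb) hab w ⟨hw1, hw2⟩
  -- Lemma B
  have hB : (∀ u v : V, u ≠ v → ∃ w, G.Adj w u ∧ G.Adj w v) ↔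
      (G.diam ≤ 2 ∧ ∀ u v, G.Adj u v → ∃ w, G.Adj u w ∧ G.Adj v w) := by
    constructor
    · intro hp
      constructor
      · have hed : G.ediam ≤ 2 := by
          rw [SimpleGraph.ediam_le_iff]
          intro u v
          rcases eq_or_ne u v with rfl | huv
          · simp
          · obtain ⟨w, hw1, hw2⟩ := hp u v huv
            calc G.edist u v ≤ G.edist u w + G.edist w v := SimpleGraph.edist_triangle
              _ ≤ 1 + 1 := add_le_add
                  (le_of_eq (SimpleGraph.edist_eq_one_iff_adj.mpr hw1.symm))
                  (le_of_eq (SimpleGraph.edist_eq_one_iff_adj.mpr hw2))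
              _ = 2 := by norm_num
        have := ENat.toNat_le_toNat hed (by simp)
        simpa [SimpleGraph.diam] using this
      · intro u v huv
        obtain ⟨w, h1, h2⟩ := hp u v huv.ne
        exact ⟨w, h1.symm, h2.symm⟩
    · rintro ⟨hd, ht⟩ u v huv
      by_cases hadj : G.Adj u v
      · obtain ⟨w, h1, h2⟩ := ht u v hadj
        exact ⟨w, h1.symm, h2.symm⟩
      · have hetop : G.ediam ≠ ⊤ := by
          have : Finite V := Finite.of_fintype V
          obtain ⟨a, b, hab⟩ := SimpleGraph.exists_edist_eq_ediam_of_finite (G := G)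
          rw [← hab]
          exact SimpleGraph.edist_ne_top_iff_reachable.mpr (hc a b)
        have hd2 : G.dist u v ≤ 2 := (SimpleGraph.dist_le_diam hetop).trans hd
        have hne0 : G.dist u v ≠ 0 := fun h => huv (hc.dist_eq_zero_iff.mp h)
        have hne1 : G.dist u v ≠ 1 := fun h => hadj (SimpleGraph.dist_eq_one_iff_adj.mp h)
        have hdist2 : G.dist u v = 2 := by omega
        obtain ⟨p, hlen⟩ := (hc u v).exists_walk_length_eq_dist
        rw [hdist2] at hlen
        cases p with
        | nil => simp at hlen
        | cons h q =>
          cases q with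
          | nil => simp at hlen
          | cons h' q' =>
            cases q' with
            | nil => exact ⟨_, h.symm, h'⟩
            | cons _ _ => simp [SimpleGraph.Walk.length_cons] at hlen
  -- Lemma C, positive direction
  have hCpos : (∀ u v : V, u ≠ v → ∃ w, G.Adj w u ∧ G.Adj w v) →
      G.openPackingPartitionNum = Fintype.card V := by
    intro hp
    have hmem : Fintype.card V ∈
        {k | ∃ f : V → Fin k, ∀ i, G.IsOpenPacking (f ⁻¹' {i})} := by
      refine ⟨Fintype.equivFin V, fun i => hsub _ ?_⟩
      intro x hx y hy
      exact (Fintype.equivFin V).injective (hx.trans hy.symm)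
    refine le_antisymm (Nat.sInf_le hmem) (le_csInf ⟨_, hmem⟩ ?_)
    rintro k ⟨f, hf⟩
    have hinj : Function.Injective f := by
      intro a b hab
      by_contra hne'
      obtain ⟨w, hw1, hw2⟩ := hp a b hne'
      exact hf (f a) a rfl b hab.symm hne' w ⟨hw1, hw2⟩
    simpa using Fintype.card_le_of_injective f hinj
  -- Lemma C, negative direction
  have hCneg : ¬(∀ u v : V, u ≠ v → ∃ w, G.Adj w u ∧ G.Adj w v) →
      G.openPackingPartitionNum ≤ Fintype.card V - 1 := by
    intro hnp
    push_neg at hnp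
    obtain ⟨u, v, huv, hno⟩ := hnp
    have hcard : Fintype.card {x : V // x ≠ v} = Fintype.card V - 1 := by
      simp [ne_eq, Fintype.card_subtype_compl]
    let e2 : {x : V // x ≠ v} ≃ Fin (Fintype.card V - 1) :=
      Fintype.equivFinOfCardEq hcard
    let g : V → {x : V // x ≠ v} := fun x => if h : x = v then ⟨u, huv⟩ else ⟨x, h⟩
    have hmem : (Fintype.card V - 1) ∈
        {k | ∃ f : V → Fin k, ∀ i, G.IsOpenPacking (f ⁻¹' {i})} := by
      refine ⟨fun x => e2 (g x), fun i a ha b hb hab w hw => ?_⟩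
      simp only [Set.mem_preimage, Set.mem_singleton_iff] at ha hb
      have hg : g a = g b := e2.injective (ha.trans hb.symm)
      simp only [g] at hg
      split_ifs at hg with h1 h2 h2
      · exact hab (h1.trans h2.symm)
      · have : u = b := by simpa using congrArg Subtype.val hg
        subst this; subst h1
        exact hno w hw.2 hw.1
      · have : a = u := by simpa using congrArg Subtype.val hg
        subst this; subst h2
        exact hno w hw.1 hw.2
      · exact hab (by simpa using congrArg Subtype.val hg)
    exact Nat.sInf_le hmem
  refine ⟨hA.trans hB, hA.trans ⟨hCpos, ?_⟩⟩
  intro hq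
  by_contra hnp
  have := hCneg hnp
  omega
end
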